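/- arXiv:1506.03364 — 5 statements merged into one kernel-verified Lean document; each statement's English description precedes it below -/
import Mathlib

section
/- Let κ be a regular uncountable cardinal. The space κ^2 (with the bounded topology) is κ-compact if and only if κ is weakly compact. -/
open Cardinal Set Topology

universe u

/-- The bounded topology on `K → Y`: basic open sets are determined by an
initial segment of values. -/
def bTop (K : Type u) [LinearOrder K] (Y : Type u) : TopologicalSpace (K → Y) :=
  TopologicalSpace.generateFrom
    {U | ∃ (b : K) (s : K → Y), U = {x | ∀ i, i < b → x i = s i}}

/-- `A` is κ-compact: every open cover (for the bounded topology) has a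
subcover of size `< #K`. -/
def KCompact (K : Type u) [LinearOrder K] {Y : Type u} (A : Set (K → Y)) : Prop :=
  ∀ 𝒰 : Set (Set (K → Y)), (∀ U ∈ 𝒰, IsOpen[bTop K Y] U) → A ⊆ ⋃₀ 𝒰 →
    ∃ 𝒱 ⊆ 𝒰, #𝒱 < #K ∧ A ⊆ ⋃₀ 𝒱

/-- `B` is a `K_κ` subset: a union of κ-many κ-compact sets. -/
def IsKK (K : Type u) [LinearOrder K] (B : Set (K → K)) : Prop :=
  ∃ C : K → Set (K → K), (∀ b, KCompact K (C b)) ∧ B = ⋃ b, C b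

/-- Nodes of the tree `Y^{<K}`: sequences of length `b`, for `b : K`. -/
abbrev Nd (K : Type u) [LinearOrder K] (Y : Type u) := Σ b : K, (Set.Iio b → Y)

/-- Restriction of a node to a smaller length. -/
def ndRes (K : Type u) [LinearOrder K] {Y : Type u} (p : Nd K Y) (c : K) (h : c ≤ p.1) :
    Nd K Y :=
  ⟨c, fun i => p.2 ⟨i.1, lt_of_lt_of_le i.2 h⟩⟩

/-- Restriction of a branch `x : K → Y` to length `b`. -/
def xRes (K : Type u) [LinearOrder K] {Y : Type u} (x : K → Y) (b : K) : Nd K Y :=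
  ⟨b, fun i => x i.1⟩

/-- `q` extends `p` as a sequence. -/
def NdExt (K : Type u) [LinearOrder K] {Y : Type u} (q p : Nd K Y) : Prop :=
  ∃ h : p.1 ≤ q.1, ∀ i : Set.Iio p.1, q.2 ⟨i.1, lt_of_lt_of_le i.2 h⟩ = p.2 i

/-- A subtree of `Y^{<K}`: a set of nodes closed under restriction. -/
def IsSubtree (K : Type u) [LinearOrder K] {Y : Type u} (T : Set (Nd K Y)) : Prop :=
  ∀ p ∈ T, ∀ c, ∀ h : c ≤ p.1, ndRes K p c h ∈ T

/-- The body `[T]`: the set of `K`-branches through `T`. -/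
def body (K : Type u) [LinearOrder K] {Y : Type u} (T : Set (Nd K Y)) : Set (K → Y) :=
  {x | ∀ b : K, xRes K x b ∈ T}

/-- `T` is pruned: every node is extended by a branch. -/
def Pruned (K : Type u) [LinearOrder K] {Y : Type u} (T : Set (Nd K Y)) : Prop :=
  ∀ p ∈ T, ∃ x ∈ body K T, NdExt K (xRes K x p.1) p

/-- `b` is a limit element: not least, and with no immediate predecessor. -/
def IsLimElt (K : Type u) [LinearOrder K] (b : K) : Prop :=
  (∃ c, c < b) ∧ ∀ c, c < b → ∃ d, c < d ∧ d < b

/-- Superclosed: closed under unions of increasing sequences of length `< K`. -/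
def Superclosed (K : Type u) [LinearOrder K] {Y : Type u} (T : Set (Nd K Y)) : Prop :=
  ∀ p : Nd K Y, IsLimElt K p.1 → (∀ c, ∀ h : c < p.1, ndRes K p c h.le ∈ T) → p ∈ T

/-- The values at position `p.1` realized by extensions of `p` in `T`, i.e. the
immediate successors of `p` in `T`. -/
def splitVals (K : Type u) [LinearOrder K] {Y : Type u} (T : Set (Nd K Y)) (p : Nd K Y) :
    Set Y :=
  {a | ∃ q ∈ T, ∃ h : p.1 < q.1,
    (∀ i : Set.Iio p.1, q.2 ⟨i.1, i.2.trans h⟩ = p.2 i) ∧ q.2 ⟨p.1, h⟩ = a}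

/-- A perfect tree: a nonempty superclosed subtree in which every node is
extended by a 2-splitting node. -/
def PerfectTree (K : Type u) [LinearOrder K] (T : Set (Nd K K)) : Prop :=
  T.Nonempty ∧ IsSubtree K T ∧ Superclosed K T ∧
    ∀ p ∈ T, ∃ q ∈ T, NdExt K q p ∧
      ∃ a ∈ splitVals K T q, ∃ a' ∈ splitVals K T q, a ≠ a'

/-- A κ-Miller tree: a nonempty superclosed subtree in which every node is
extended by a κ-splitting node. -/
def MillerTree (K : Type u) [LinearOrder K] (T : Set (Nd K K)) : Prop :=
  T.Nonempty ∧ IsSubtree K T ∧ Superclosed K T ∧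
    ∀ p ∈ T, ∃ q ∈ T, NdExt K q p ∧ #K ≤ #(splitVals K T q)

/-- A κ-tree: a subtree of height `K` all of whose levels have size `< #K`. -/
def KTree (K : Type u) [LinearOrder K] {Y : Type u} (T : Set (Nd K Y)) : Prop :=
  (∀ b : K, ∃ t : Set.Iio b → Y, (⟨b, t⟩ : Nd K Y) ∈ T) ∧
    ∀ b : K, #{t : Set.Iio b → Y | (⟨b, t⟩ : Nd K Y) ∈ T} < #K

/-- A κ-Aronszajn tree: a κ-tree with no branch. -/
def Aronszajn (K : Type u) [LinearOrder K] (S : Set (Nd K K)) : Prop :=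
  IsSubtree K S ∧ KTree K S ∧ body K S = ∅

/-- The tree property for `K`: every κ-tree has a branch. -/
def TreeProp (K : Type u) [LinearOrder K] : Prop :=
  ∀ T : Set (Nd K K), IsSubtree K T → KTree K T → (body K T).Nonempty

/-- weak compactness: inaccessibility together with the tree property. -/
def WComp (K : Type u) [LinearOrder K] : Prop :=
  (#K).IsInaccessible ∧ TreeProp K

/-- `C` is homeomorphic to the generalized Baire space `K → K`. -/
def HomeoToBaire (K : Type u) [LinearOrder K] (C : Set (K → K)) : Prop :=
  letI := bTop K K
  Nonempty (↥C ≃ₜ (K → K))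

/-- `C` is homeomorphic to the generalized Cantor space `K → ULift.{u} Bool`. -/
def HomeoToCantor (K : Type u) [LinearOrder K] (C : Set (K → K)) : Prop :=
  letI := bTop K K
  letI : TopologicalSpace (K → ULift.{u} Bool) := bTop K (ULift.{u} Bool)
  Nonempty (↥C ≃ₜ (K → ULift.{u} Bool))

/-- The Hurewicz dichotomy for `A`. -/
def HD (K : Type u) [LinearOrder K] (A : Set (K → K)) : Prop :=
  (∃ B, IsKK K B ∧ A ⊆ B) ∨
    ∃ C ⊆ A, IsClosed[bTop K K] C ∧ HomeoToBaire K C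

/-- The Miller-tree Hurewicz dichotomy for `A`. -/
def MillerHD (K : Type u) [LinearOrder K] (A : Set (K → K)) : Prop :=
  (∃ B, IsKK K B ∧ A ⊆ B) ∨ ∃ T, MillerTree K T ∧ body K T ⊆ A

/-- Σ¹₁ subsets of `K → K`: projections of closed subsets of the product. -/
def Sigma11 (K : Type u) [LinearOrder K] (A : Set (K → K)) : Prop :=
  letI := bTop K K
  ∃ C : Set ((K → K) × (K → K)), IsClosed C ∧ A = Prod.fst '' C

/-- The κ-perfect set property. -/
def PSP (K : Type u) [LinearOrder K] (A : Set (K → K)) : Prop :=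
  #A ≤ #K ∨ ∃ C ⊆ A, IsClosed[bTop K K] C ∧ HomeoToCantor K C

/-- `A ⊆ K → K` is bounded. -/
def BddSet (K : Type u) [LinearOrder K] (A : Set (K → K)) : Prop :=
  ∃ x : K → K, ∀ y ∈ A, ∀ i, y i ≤ x i

/-- `A ⊆ K → K` is eventually bounded. -/
def EvBddSet (K : Type u) [LinearOrder K] (A : Set (K → K)) : Prop :=
  ∃ x : K → K, ∀ y ∈ A, ∃ b : K, ∀ i, b ≤ i → y i ≤ x i

/-- Nodes of the product tree `K^{<K} × K^{<K}` (pairs of equal length). -/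
abbrev PNd (K : Type u) [LinearOrder K] := Σ b : K, (Set.Iio b → K) × (Set.Iio b → K)

/-- Subtree of the product tree: closed under simultaneous restriction. -/
def IsPSubtree (K : Type u) [LinearOrder K] (T : Set (PNd K)) : Prop :=
  ∀ p ∈ T, ∀ c, ∀ h : c ≤ p.1,
    (⟨c, fun i => p.2.1 ⟨i.1, lt_of_lt_of_le i.2 h⟩,
        fun i => p.2.2 ⟨i.1, lt_of_lt_of_le i.2 h⟩⟩ : PNd K) ∈ T

/-- The projection `p[T]` of the set of branches of a product tree to the first
coordinate. -/
def pProj (K : Type u) [LinearOrder K] (T : Set (PNd K)) : Set (K → K) :=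
  {x | ∃ y : K → K, ∀ b : K,
    (⟨b, fun i => x i.1, fun i => y i.1⟩ : PNd K) ∈ T}

/-- An `∃^x`-perfect embedding into a product tree `T`. -/
def PerfEmb (K : Type u) [LinearOrder K] (T : Set (PNd K)) (e : Nd K (ULift.{u} Bool) → PNd K) : Prop :=
  (∀ u, e u ∈ T) ∧
  (∀ u u' : Nd K (ULift.{u} Bool), ∀ h : u.1 < u'.1,
     (∀ i : Set.Iio u.1, u'.2 ⟨i.1, i.2.trans h⟩ = u.2 i) →
     ∃ h' : (e u).1 < (e u').1,
       (∀ i : Set.Iio (e u).1, (e u').2.1 ⟨i.1, i.2.trans h'⟩ = (e u).2.1 i) ∧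
       (∀ i : Set.Iio (e u).1, (e u').2.2 ⟨i.1, i.2.trans h'⟩ = (e u).2.2 i)) ∧
  (∀ u u' : Nd K (ULift.{u} Bool), ¬ NdExt K u u' → ¬ NdExt K u' u →
     ¬ NdExt K ⟨(e u).1, (e u).2.1⟩ ⟨(e u').1, (e u').2.1⟩ ∧
     ¬ NdExt K ⟨(e u').1, (e u').2.1⟩ ⟨(e u).1, (e u).2.1⟩) ∧
  (∀ u : Nd K (ULift.{u} Bool), IsLimElt K u.1 → ∀ d, d < (e u).1 →
     ∃ c, ∃ h : c < u.1, d < (e (ndRes K u c h.le)).1)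

/-- The immediate extension `u⌢⟨a⟩` of a node `u` by a value `a`. -/
def extNd (K : Type u) [LinearOrder K] [SuccOrder K] (u : Nd K K) (a : K) : Nd K K :=
  ⟨Order.succ u.1, fun i => if h : i.1 < u.1 then u.2 ⟨i.1, h⟩ else a⟩

/-- An `∃^x`-superperfect embedding into a product tree `T`. -/
def SuperPerfEmb (K : Type u) [LinearOrder K] [SuccOrder K] (T : Set (PNd K))
    (e : Nd K K → PNd K) : Prop :=
  (∀ u, e u ∈ T) ∧
  (∀ u u' : Nd K K, ∀ h : u.1 < u'.1,
     (∀ i : Set.Iio u.1, u'.2 ⟨i.1, i.2.trans h⟩ = u.2 i) →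
     ∃ h' : (e u).1 < (e u').1,
       (∀ i : Set.Iio (e u).1, (e u').2.1 ⟨i.1, i.2.trans h'⟩ = (e u).2.1 i) ∧
       (∀ i : Set.Iio (e u).1, (e u').2.2 ⟨i.1, i.2.trans h'⟩ = (e u).2.2 i)) ∧
  (∀ u : Nd K K, IsLimElt K u.1 → ∀ d, d < (e u).1 →
     ∃ c, ∃ h : c < u.1, d < (e (ndRes K u c h.le)).1) ∧
  (∀ u : Nd K K, ∃ γ : K, (e u).1 ≤ γ ∧
     ∃ hlen : ∀ a : K, γ < (e (extNd K u a)).1,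
       ∀ a b : K, a ≠ b →
         (∀ i : Set.Iio γ,
           (e (extNd K u a)).2.1 ⟨i.1, i.2.trans (hlen a)⟩ =
           (e (extNd K u b)).2.1 ⟨i.1, i.2.trans (hlen b)⟩) ∧
         (e (extNd K u a)).2.1 ⟨γ, hlen a⟩ ≠ (e (extNd K u b)).2.1 ⟨γ, hlen b⟩)


set_option linter.unusedSectionVars false

section AuxWC
variable {K : Type u} [LinearOrder K] [WellFoundedLT K]

omit [WellFoundedLT K] in
lemma wcKreg (hunc : ℵ₀ < #K) (hpow : Cardinal.powerlt #K #K = #K) : (#K).IsRegular := by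
  refine ⟨hunc.le, ?_⟩
  by_contra h
  push_neg at h
  have h1 : #K < #K ^ (#K).ord.cof := Cardinal.lt_power_cof hunc.le
  have h2 : #K ^ (#K).ord.cof ≤ Cardinal.powerlt #K #K := Cardinal.le_powerlt _ h
  rw [hpow] at h2
  exact absurd (h1.trans_le h2) (lt_irrefl _)

lemma wcSmallBdd (hseg : ∀ b : K, #(Set.Iio b) < #K) (hunc : ℵ₀ < #K)
    (hpow : Cardinal.powerlt #K #K = #K) (S : Set K) (hS : #S < #K) :
    ∃ b : K, ∀ s ∈ S, s < b := by
  by_contra h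
  push_neg at h
  have hcov : (Set.univ : Set K) = ⋃ s : S, Set.Iic (s : K) := by
    ext b
    simp only [Set.mem_univ, true_iff, Set.mem_iUnion]
    obtain ⟨s, hs, hbs⟩ := h b
    exact ⟨⟨s, hs⟩, hbs⟩
  have h1 : #K ≤ Cardinal.sum fun s : S => #(Set.Iic (s : K)) := by
    calc #K = #(Set.univ : Set K) := (Cardinal.mk_univ).symm
    _ = #(⋃ s : S, Set.Iic (s : K)) := by rw [hcov]
    _ ≤ _ := Cardinal.mk_iUnion_le_sum_mk
  have h2 : Cardinal.sum (fun s : S => #(Set.Iic (s : K))) < #K := by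
    refine Cardinal.sum_lt_of_isRegular (wcKreg hunc hpow) hS fun s => ?_
    have : Set.Iic (s : K) = insert (s : K) (Set.Iio (s : K)) := by
      ext y; simp [le_iff_lt_or_eq, or_comm]
    rw [this]
    calc #(insert (s : K) (Set.Iio (s : K)) : Set K) ≤ #(Set.Iio (s : K)) + 1 :=
      Cardinal.mk_insert_le
    _ < #K := Cardinal.add_lt_of_lt hunc.le (hseg _) (lt_trans one_lt_aleph0 hunc)
  exact absurd (h1.trans_lt h2) (lt_irrefl _)

lemma wcNoMax (hseg : ∀ b : K, #(Set.Iio b) < #K) (hunc : ℵ₀ < #K)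
    (hpow : Cardinal.powerlt #K #K = #K) (a : K) : ∃ b, a < b := by
  obtain ⟨b, hb⟩ := wcSmallBdd hseg hunc hpow {a} (by
    simp only [Cardinal.mk_fintype, Fintype.card_unique]
    exact lt_trans one_lt_aleph0 hunc)
  exact ⟨b, hb a rfl⟩

omit [WellFoundedLT K] in
lemma wcMkNdLe (hseg : ∀ b : K, #(Set.Iio b) < #K) (hunc : ℵ₀ < #K)
    (hpow : Cardinal.powerlt #K #K = #K) : #(Σ b : K, (Set.Iio b → K)) ≤ #K := by
  rw [Cardinal.mk_sigma]
  calc Cardinal.sum (fun b : K => #(Set.Iio b → K))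
      ≤ Cardinal.sum (fun _ : K => #K) := by
        refine Cardinal.sum_le_sum _ _ fun b => ?_
        rw [← Cardinal.power_def]
        exact le_trans (Cardinal.le_powerlt _ (hseg b)) hpow.le
    _ = #K * #K := by rw [Cardinal.sum_const']
    _ = #K := Cardinal.mul_eq_self hunc.le

lemma wcExistsIio (x : Cardinal.{u}) (hx : x < #K) : ∃ b : K, #(Set.Iio b) = x := by
  have h1 : x.ord < Ordinal.type ((· < ·) : K → K → Prop) := by
    have : (#K).ord ≤ Ordinal.type ((· < ·) : K → K → Prop) := by
      rw [Cardinal.ord_le, Ordinal.card_type]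
    exact lt_of_lt_of_le (Cardinal.ord_lt_ord.mpr hx) this
  obtain ⟨b, hb⟩ := Ordinal.typein_surj ((· < ·) : K → K → Prop) h1
  refine ⟨b, ?_⟩
  have h2 := Ordinal.card_typein (r := ((· < ·) : K → K → Prop)) b
  have h3 : #(Set.Iio b) = #{y : K // y < b} := rfl
  rw [h3, ← h2, hb, Cardinal.card_ord]

end AuxWC

/-- The basic clopen set of functions agreeing with `y` below `β`. -/
def Nb {K : Type u} [LinearOrder K] {Y : Type u} (β : K) (y : K → Y) : Set (K → Y) :=
  {z | ∀ i, i < β → z i = y i}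

/-- The set of branch-restrictions determined by node `p`. -/
def NdSet (K : Type u) [LinearOrder K] {Y : Type u} (p : Nd K Y) : Set (K → Y) :=
  {x | ∀ i, ∀ h : i < p.1, x i = p.2 ⟨i, h⟩}

/-- The set of `x` coding a coherent chain through `T` up to level `b`. -/
def FSet (K : Type u) [LinearOrder K] (T : Set (Nd K K)) (code : Nd K K → K) (b : K) :
    Set (K → ULift.{u} Bool) :=
  {x | ∃ t : Set.Iio b → K, (⟨b, t⟩ : Nd K K) ∈ T ∧
    ∀ c, ∀ hc : c ≤ b, ∀ s : Set.Iio c → K, (⟨c, s⟩ : Nd K K) ∈ T →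
      ((x (code ⟨c, s⟩)).down = true ↔ s = fun i => t ⟨i.1, lt_of_lt_of_le i.2 hc⟩)}

section AuxWC2
variable {K : Type u} [LinearOrder K] {Y : Type u}

lemma wcNbOpen (β : K) (y : K → Y) : IsOpen[bTop K Y] (Nb β y) :=
  TopologicalSpace.isOpen_generateFrom_of_mem ⟨β, y, rfl⟩

lemma wcNbMono {β β' : K} (h : β' ≤ β) (y : K → Y) : Nb β y ⊆ Nb β' y :=
  fun z hz i hi => hz i (lt_of_lt_of_le hi h)

lemma wcDetOpen (β : K) (A : Set (K → Y))
    (h : ∀ x y : K → Y, (∀ i, i < β → x i = y i) → x ∈ A → y ∈ A) :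
    IsOpen[bTop K Y] A := by
  have : A = ⋃ x : A, Nb β (x : K → Y) := by
    ext z
    simp only [Set.mem_iUnion]
    constructor
    · intro hz; exact ⟨⟨z, hz⟩, fun i _ => rfl⟩
    · rintro ⟨⟨x, hx⟩, hzx⟩
      exact h x z (fun i hi => (hzx i hi).symm) hx
  rw [this]
  exact @isOpen_iUnion _ _ (bTop K Y) _ (fun x => wcNbOpen (Y := Y) β x)

lemma wcNbhd [Nonempty K] (U : Set (K → Y)) (hU : IsOpen[bTop K Y] U) :
    ∀ y ∈ U, ∃ β : K, Nb β y ⊆ U := by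
  have hU' : TopologicalSpace.GenerateOpen
      {U | ∃ (b : K) (s : K → Y), U = {x | ∀ i, i < b → x i = s i}} U := hU
  clear hU
  induction hU' with
  | basic V hV =>
    obtain ⟨b, s, rfl⟩ := hV
    intro y hy
    exact ⟨b, fun z hz i hi => (hz i hi).trans (hy i hi)⟩
  | univ => intro y _; exact ⟨Classical.arbitrary K, fun z _ => trivial⟩
  | inter V W _ _ ihV ihW =>
    intro y hy
    obtain ⟨β₁, h₁⟩ := ihV y hy.1
    obtain ⟨β₂, h₂⟩ := ihW y hy.2
    exact ⟨max β₁ β₂, fun z hz =>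
      ⟨h₁ (wcNbMono (le_max_left _ _) y hz), h₂ (wcNbMono (le_max_right _ _) y hz)⟩⟩
  | sUnion S _ ih =>
    rintro y ⟨V, hV, hyV⟩
    obtain ⟨β, hβ⟩ := ih V hV y hyV
    exact ⟨β, fun z hz => ⟨V, hV, hβ hz⟩⟩

end AuxWC2

section AuxWC3
variable {K : Type u} [LinearOrder K] [WellFoundedLT K]

lemma wcTwoPowerLt (hK : KCompact K (Set.univ : Set (K → ULift.{u} Bool)))
    (x : Cardinal.{u}) (hx : x < #K) : 2 ^ x < #K := by
  obtain ⟨b, hb⟩ := wcExistsIio x hx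
  set Y := ULift.{u} Bool
  set 𝒰 : Set (Set (K → Y)) := {U | ∃ s : K → Y, U = Nb b s} with h𝒰
  obtain ⟨𝒱, h𝒱𝒰, h𝒱c, h𝒱cov⟩ := hK 𝒰
    (by rintro U ⟨s, rfl⟩; exact wcNbOpen b s)
    (by intro z _; exact ⟨Nb b z, ⟨z, rfl⟩, fun i _ => rfl⟩)
  have key : ∀ t : Set.Iio b → Y, ∃ V : Set (K → Y), V ∈ 𝒱 ∧
      (fun i => if h : i < b then t ⟨i, h⟩ else ULift.up false) ∈ V := by
    intro t
    obtain ⟨V, hV, hx⟩ := h𝒱cov (Set.mem_univ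
      (fun i => if h : i < b then t ⟨i, h⟩ else ULift.up false))
    exact ⟨V, hV, hx⟩
  choose V hVmem hVx using key
  have hinj : Function.Injective V := by
    intro t t' he
    obtain ⟨s, hs⟩ := h𝒱𝒰 (hVmem t)
    funext i
    have h1 := hVx t
    have h2 := hVx t'
    rw [hs] at h1
    rw [← he, hs] at h2
    have e1 := h1 i.1 i.2
    have e2 := h2 i.1 i.2
    have hib : (i : K) < b := i.2
    simp only [dif_pos hib] at e1 e2
    exact e1.trans e2.symm
  have h2x : 2 ^ x = #(Set.Iio b → Y) := by
    rw [Cardinal.mk_arrow]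
    simp [hb, Y]
  rw [h2x]
  have : #(Set.Iio b → Y) ≤ #𝒱 :=
    Cardinal.mk_le_of_injective (f := fun t => (⟨V t, hVmem t⟩ : 𝒱))
      (fun t t' h => hinj (congrArg Subtype.val h))
  exact this.trans_lt h𝒱c

lemma wcTreeProp (hseg : ∀ b : K, #(Set.Iio b) < #K) (hunc : ℵ₀ < #K)
    (hpow : Cardinal.powerlt #K #K = #K)
    (hK : KCompact K (Set.univ : Set (K → ULift.{u} Bool))) : TreeProp K := by
  classical
  intro T hsub hkt
  obtain ⟨code, hcode⟩ : ∃ code : Nd K K → K, Function.Injective code := by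
    obtain ⟨e⟩ := Cardinal.le_def _ _ |>.mp (wcMkNdLe hseg hunc hpow)
    exact ⟨e, e.injective⟩
  set Y := ULift.{u} Bool with hY
  set F : K → Set (K → Y) := FSet K T code with hF
  have hFmono : ∀ {c b : K}, c ≤ b → F b ⊆ F c := by
    intro c b hcb x hx
    obtain ⟨t, htT, hxc⟩ := hx
    refine ⟨fun i => t ⟨i.1, lt_of_lt_of_le i.2 hcb⟩, hsub ⟨b, t⟩ htT c hcb, ?_⟩
    intro c' hc' s hs
    rw [hxc c' (hc'.trans hcb) s hs]
  have hFne : ∀ b, (F b).Nonempty := by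
    intro b
    obtain ⟨t, ht⟩ := (hkt.1 b)
    set P : K → Prop := fun k => ∃ c, ∃ hc : c ≤ b, ∃ s : Set.Iio c → K,
      (⟨c, s⟩ : Nd K K) ∈ T ∧ code ⟨c, s⟩ = k ∧
      s = (fun i => t ⟨i.1, lt_of_lt_of_le i.2 hc⟩) with hP
    refine ⟨fun k => ULift.up (if P k then true else false), t, ht, ?_⟩
    intro c hc s hs
    constructor
    · intro he
      by_cases hPk : P (code ⟨c, s⟩)
      · obtain ⟨c', hc', s', hs', hcd, hrs⟩ := hPk
        obtain ⟨h1, h2⟩ := Sigma.mk.inj_iff.mp (hcode hcd)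
        subst h1
        have h3 : s' = s := eq_of_heq h2
        subst h3
        exact hrs
      · simp only [if_neg hPk] at he
        exact absurd he (by simp)
    · intro he
      have hPk : P (code ⟨c, s⟩) := ⟨c, hc, s, hs, rfl, he⟩
      simp only [if_pos hPk]
  have hFdet : ∀ b (x y : K → Y), x ∈ F b →
      (∀ p : Nd K K, p ∈ T → p.1 ≤ b → y (code p) = x (code p)) → y ∈ F b := by
    intro b x y hx hagree
    obtain ⟨t, htT, hxc⟩ := hx
    refine ⟨t, htT, fun c hc s hs => ?_⟩
    rw [show y (code ⟨c, s⟩) = x (code ⟨c, s⟩) from hagree ⟨c, s⟩ hs hc]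
    exact hxc c hc s hs
  have hiic : ∀ b : K, #(Set.Iic b) < #K := by
    intro b
    have : Set.Iic b = insert b (Set.Iio b) := by
      ext y; simp [le_iff_lt_or_eq, or_comm]
    rw [this]
    calc #(insert b (Set.Iio b) : Set K) ≤ #(Set.Iio b) + 1 := Cardinal.mk_insert_le
    _ < #K := Cardinal.add_lt_of_lt hunc.le (hseg _) (lt_trans one_lt_aleph0 hunc)
  have hFopenc : ∀ b, IsOpen[bTop K Y] (F b)ᶜ := by
    intro b
    set D : Set K := code '' {p : Nd K K | p ∈ T ∧ p.1 ≤ b} with hD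
    have hDsmall : #D < #K := by
      have h1 : #D ≤ #{p : Nd K K | p ∈ T ∧ p.1 ≤ b} := Cardinal.mk_image_le
      refine h1.trans_lt ?_
      have h2 : #{p : Nd K K | p ∈ T ∧ p.1 ≤ b} ≤ Cardinal.sum
          (fun c : (Set.Iic b) =>
            #{s : Set.Iio (c : K) → K | (⟨(c : K), s⟩ : Nd K K) ∈ T}) := by
        rw [← Cardinal.mk_sigma]
        refine Cardinal.mk_le_of_injective
          (f := fun p => ⟨⟨p.1.1, p.2.2⟩, ⟨p.1.2, p.2.1⟩⟩) ?_
        rintro ⟨⟨c₁, s₁⟩, hm₁, hl₁⟩ ⟨⟨c₂, s₂⟩, hm₂, hl₂⟩ h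
        obtain ⟨h1, h2⟩ := Sigma.mk.inj_iff.mp h
        have hc : c₁ = c₂ := congrArg Subtype.val h1
        subst hc
        have hs : s₁ = s₂ := congrArg Subtype.val (eq_of_heq h2)
        subst hs
        rfl
      refine h2.trans_lt (Cardinal.sum_lt_of_isRegular (wcKreg hunc hpow) (hiic b)
        (fun c => hkt.2 (c : K)))
    obtain ⟨β, hβ⟩ := wcSmallBdd hseg hunc hpow D hDsmall
    refine wcDetOpen β _ ?_
    intro x y hxy hxc hyF
    refine hxc (hFdet b y x hyF ?_)
    intro p hpT hpb
    exact hxy (code p) (hβ _ ⟨p, ⟨hpT, hpb⟩, rfl⟩)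
  have hIne : (⋂ b, F b).Nonempty := by
    by_contra hI
    rw [Set.not_nonempty_iff_eq_empty] at hI
    set 𝒰 : Set (Set (K → Y)) := {U | ∃ b, U = (F b)ᶜ} with h𝒰
    obtain ⟨𝒱, h𝒱𝒰, h𝒱c, h𝒱cov⟩ := hK 𝒰 (by rintro U ⟨b, rfl⟩; exact hFopenc b)
      (by intro z _
          have hz : z ∉ ⋂ b, F b := by rw [hI]; exact Set.notMem_empty z
          rw [Set.mem_iInter] at hz; push_neg at hz
          obtain ⟨b, hb⟩ := hz
          exact ⟨(F b)ᶜ, ⟨b, rfl⟩, hb⟩)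
    have hsel : ∀ V : 𝒱, ∃ b : K, (V : Set (K → Y)) = (F b)ᶜ := fun V => h𝒱𝒰 V.2
    choose g hg using hsel
    obtain ⟨b₀, hb₀⟩ := wcSmallBdd hseg hunc hpow (Set.range g)
      ((Cardinal.mk_range_le).trans_lt h𝒱c)
    obtain ⟨x₀, hx₀⟩ := hFne b₀
    obtain ⟨V, hV, hx₀V⟩ := h𝒱cov (Set.mem_univ x₀)
    rw [show V = (F (g ⟨V, hV⟩))ᶜ from hg ⟨V, hV⟩] at hx₀V
    exact hx₀V (hFmono (le_of_lt (hb₀ _ (Set.mem_range_self ⟨V, hV⟩))) hx₀)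
  obtain ⟨x, hx⟩ := hIne
  have hxb : ∀ b, x ∈ F b := Set.mem_iInter.mp hx
  choose t htT htc using hxb
  have hco : ∀ c b (hcb : c ≤ b),
      t c = fun i : Set.Iio c => t b ⟨i.1, lt_of_lt_of_le i.2 hcb⟩ := by
    intro c b hcb
    have h1 : (⟨c, fun i : Set.Iio c => t b ⟨i.1, lt_of_lt_of_le i.2 hcb⟩⟩ : Nd K K) ∈ T :=
      hsub ⟨b, t b⟩ (htT b) c hcb
    have h2 : (x (code ⟨c, fun i : Set.Iio c =>
        t b ⟨i.1, lt_of_lt_of_le i.2 hcb⟩⟩)).down = true := by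
      rw [htc b c hcb _ h1]
    have h3 := (htc c c le_rfl _ h1).mp h2
    exact h3.symm
  choose σ hσ using fun i : K => wcNoMax hseg hunc hpow i
  refine ⟨fun i => t (σ i) ⟨i, hσ i⟩, ?_⟩
  intro b
  have he : (fun i : Set.Iio b => t (σ i.1) ⟨i.1, hσ i.1⟩) = t b := by
    funext i
    have e1 := congrFun (hco (σ i.1) (max b (σ i.1)) (le_max_right _ _)) ⟨i.1, hσ i.1⟩
    have e2 := congrFun (hco b (max b (σ i.1)) (le_max_left _ _)) i
    exact e1.trans e2.symm
  show (⟨b, fun i : Set.Iio b => t (σ i.1) ⟨i.1, hσ i.1⟩⟩ : Nd K K) ∈ T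
  rw [he]
  exact htT b

lemma wcKCompact (hseg : ∀ b : K, #(Set.Iio b) < #K) (hunc : ℵ₀ < #K)
    (hw : WComp K) : KCompact K (Set.univ : Set (K → ULift.{u} Bool)) := by
  classical
  have hne : Nonempty K := Cardinal.mk_ne_zero_iff.mp (aleph0_pos.trans hunc).ne'
  have hnt : Nontrivial K := Cardinal.one_lt_iff_nontrivial.mp (one_lt_aleph0.trans hunc)
  have hsl : (#K).IsStrongLimit := hw.1.isStrongLimit
  intro 𝒰 hopen hcov
  set S : Set (Nd K (ULift.{u} Bool)) := {p | ∀ U ∈ 𝒰, ¬ (NdSet K p ⊆ U)} with hS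
  have hpow2 : ∀ b : K, #(Set.Iio b → ULift.{u} Bool) < #K := by
    intro b
    have : #(Set.Iio b → ULift.{u} Bool) = 2 ^ #(Set.Iio b) := by
      rw [Cardinal.mk_arrow]; simp
    rw [this]
    exact hsl.2 (hseg b)
  by_cases hcase : ∀ b : K, ∃ t : Set.Iio b → ULift.{u} Bool,
      (⟨b, t⟩ : Nd K (ULift.{u} Bool)) ∈ S
  · exfalso
    obtain ⟨k0, k1, hk01⟩ := exists_pair_ne K
    set m : ULift.{u} Bool → K := fun u => if u.down then k1 else k0 with hm
    have hm0 : m (ULift.up false) = k0 := by rw [hm]; simp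
    have hm1 : m (ULift.up true) = k1 := by rw [hm]; simp
    have hinv : ∀ w : ULift.{u} Bool,
        (if m w = k1 then (ULift.up true : ULift.{u} Bool) else ULift.up false) = w := by
      intro w
      rcases w with ⟨bw⟩
      cases bw
      · rw [hm0, if_neg hk01]
      · rw [hm1, if_pos rfl]
    set φ : Nd K (ULift.{u} Bool) → Nd K K := fun p => ⟨p.1, fun i => m (p.2 i)⟩ with hφ
    set T : Set (Nd K K) := φ '' S with hT
    have hSsub : ∀ p ∈ S, ∀ c, ∀ h : c ≤ p.1, ndRes K p c h ∈ S := by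
      rintro p hp c h U hU hsubU
      refine hp U hU ?_
      intro z hz
      refine hsubU ?_
      intro i hi
      exact hz i (lt_of_lt_of_le hi h)
    have hTsub : IsSubtree K T := by
      rintro p' ⟨p, hp, rfl⟩ c h
      exact ⟨ndRes K p c h, hSsub p hp c h, rfl⟩
    have hTtree : KTree K T := by
      constructor
      · intro b
        obtain ⟨t, ht⟩ := hcase b
        exact ⟨fun i => m (t i), ⟨⟨b, t⟩, ht, rfl⟩⟩
      · intro b
        set ψ : (Set.Iio b → K) → (Set.Iio b → ULift.{u} Bool) :=
          fun s i => if s i = k1 then ULift.up true else ULift.up false with hψ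
        have hψinj : ∀ s s' : Set.Iio b → K,
            (⟨b, s⟩ : Nd K K) ∈ T → (⟨b, s'⟩ : Nd K K) ∈ T → ψ s = ψ s' → s = s' := by
          have hrec : ∀ s : Set.Iio b → K, (⟨b, s⟩ : Nd K K) ∈ T →
              ∃ u : Set.Iio b → ULift.{u} Bool, s = fun i => m (u i) := by
            rintro s ⟨⟨c, u⟩, hu, he⟩
            obtain ⟨h1, h2⟩ := Sigma.mk.inj_iff.mp he
            subst h1
            exact ⟨u, (eq_of_heq h2).symm⟩
          rintro s s' hs hs' he
          obtain ⟨u, rfl⟩ := hrec s hs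
          obtain ⟨u', rfl⟩ := hrec s' hs'
          have hcanc : ∀ u : Set.Iio b → ULift.{u} Bool, ψ (fun i => m (u i)) = u := by
            intro u
            funext i
            rw [hψ]
            exact hinv (u i)
          rw [← hcanc u, ← hcanc u', he]
        have : #{t : Set.Iio b → K | (⟨b, t⟩ : Nd K K) ∈ T} ≤
            #(Set.Iio b → ULift.{u} Bool) := by
          refine Cardinal.mk_le_of_injective (f := fun s => ψ s.1) ?_
          intro s s' h
          exact Subtype.ext (hψinj s.1 s'.1 s.2 s'.2 h)
        exact this.trans_lt (hpow2 b)
    obtain ⟨x, hx⟩ := hw.2 T hTsub hTtree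
    set y : K → ULift.{u} Bool :=
      fun i => if x i = k1 then ULift.up true else ULift.up false with hy
    have hyS : ∀ b : K, xRes K y b ∈ S := by
      intro b
      obtain ⟨⟨c, u⟩, hu, he⟩ := hx b
      obtain ⟨h1, h2⟩ := Sigma.mk.inj_iff.mp he
      subst h1
      have h3 : (fun i : Set.Iio c => m (u i)) = fun i : Set.Iio c => x i.1 := eq_of_heq h2
      have h4 : xRes K y c = ⟨c, u⟩ := by
        show (⟨c, fun i : Set.Iio c => y i.1⟩ : Nd K (ULift.{u} Bool)) = ⟨c, u⟩
        have : (fun i : Set.Iio c => y i.1) = u := by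
          funext i
          have h5 : x i.1 = m (u i) := (congrFun h3 i).symm
          rw [hy]
          show (if x i.1 = k1 then (ULift.up true : ULift.{u} Bool) else ULift.up false) = u i
          rw [h5]
          exact hinv (u i)
        rw [this]
      rw [h4]
      exact hu
    obtain ⟨U, hU, hyU⟩ := hcov (Set.mem_univ y)
    obtain ⟨β, hβ⟩ := wcNbhd U (hopen U hU) y hyU
    refine hyS β U hU ?_
    intro z hz
    refine hβ ?_
    intro i hi
    exact hz i hi
  · push_neg at hcase
    obtain ⟨b, hb⟩ := hcase
    have hsel : ∀ t : Set.Iio b → ULift.{u} Bool, ∃ U, U ∈ 𝒰 ∧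
        NdSet K (⟨b, t⟩ : Nd K (ULift.{u} Bool)) ⊆ U := by
      intro t
      have := hb t
      rw [hS] at this
      simp only [Set.mem_setOf_eq, not_forall] at this
      obtain ⟨U, hU, hsubU⟩ := this
      exact ⟨U, hU, not_not.mp hsubU⟩
    choose u hu𝒰 husub using hsel
    refine ⟨Set.range u, ?_, ?_, ?_⟩
    · rintro U ⟨t, rfl⟩; exact hu𝒰 t
    · exact (Cardinal.mk_range_le).trans_lt (hpow2 b)
    · intro z _
      refine ⟨u (fun i => z i.1), ⟨_, rfl⟩, ?_⟩
      refine husub _ ?_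
      intro i hi
      rfl

end AuxWC3

/-- The generalized Cantor space `K → 2` is κ-compact iff `K` is weakly
compact. -/
theorem cantor_kCompact_iff_weaklyCompact (K : Type u) [LinearOrder K] [WellFoundedLT K]
    (hseg : ∀ b : K, #(Set.Iio b) < #K)
    (hunc : ℵ₀ < #K) (hpow : Cardinal.powerlt #K #K = #K) :
    KCompact K (Set.univ : Set (K → ULift.{u} Bool)) ↔ WComp K := by
  constructor
  · intro hK
    refine ⟨⟨hunc, (wcKreg hunc hpow).le_cof_ord,
      fun x hx => wcTwoPowerLt hK x hx⟩, wcTreeProp hseg hunc hpow hK⟩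
  · intro hw
    exact wcKCompact hseg hunc hw
end

section
/- Let κ be an uncountable cardinal with κ = κ^{<κ}. If A ⊆ κ^κ is contained in a κ-compact subset of κ^κ, then A is bounded. -/
open Cardinal Set Topology

universe u

/-- A subset of a κ-compact subset of `K → K` is bounded. -/
theorem bounded_of_subset_kCompact (K : Type u) [LinearOrder K] [WellFoundedLT K]
    (hseg : ∀ b : K, #(Set.Iio b) < #K)
    (hunc : ℵ₀ < #K) (hpow : Cardinal.powerlt #K #K = #K)
    (A B : Set (K → K)) (hB : KCompact K B) (hAB : A ⊆ B) :
    BddSet K A := by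
  classical
  have hinf : ℵ₀ ≤ #K := hunc.le
  -- κ is regular
  have hreg : (#K).IsRegular := by
    refine ⟨hinf, ?_⟩
    by_contra h
    push_neg at h
    have h1 : #K < #K ^ (#K).ord.cof := Cardinal.lt_power_cof hinf
    have h2 : #K ^ (#K).ord.cof ≤ Cardinal.powerlt #K #K := Cardinal.le_powerlt _ h
    rw [hpow] at h2
    exact absurd (h1.trans_le h2) (lt_irrefl _)
  -- each Iic has small cardinality
  have hIic : ∀ c : K, #(Set.Iic c) < #K := by
    intro c
    rw [← Set.Iio_insert]
    calc #(insert c (Set.Iio c) : Set K) ≤ #(Set.Iio c) + 1 := Cardinal.mk_insert_le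
    _ < #K := Cardinal.add_lt_of_lt hinf (hseg c) (lt_of_lt_of_le (by norm_num) hinf)
  -- small subsets of K are bounded
  have key : ∀ S : Set K, #S < #K → ∃ ub : K, ∀ c ∈ S, c ≤ ub := by
    intro S hS
    have h1 : #(⋃ c : S, Set.Iic (c : K)) < #K := by
      calc #(⋃ c : S, Set.Iic (c : K)) ≤ Cardinal.sum (fun c : S => #(Set.Iic (c : K))) :=
        Cardinal.mk_iUnion_le_sum_mk
      _ < #K := Cardinal.sum_lt_of_isRegular hreg hS (fun c => hIic c)
    have h2 : (⋃ c : S, Set.Iic (c : K)) ≠ Set.univ := by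
      intro h
      rw [h, Cardinal.mk_univ] at h1
      exact absurd h1 (lt_irrefl _)
    obtain ⟨x, hx⟩ : ∃ x, x ∉ ⋃ c : S, Set.Iic (c : K) := by
      by_contra h
      push_neg at h
      exact h2 (Set.eq_univ_of_forall h)
    refine ⟨x, fun c hc => ?_⟩
    by_contra hcx
    exact hx (Set.mem_iUnion.2 ⟨⟨c, hc⟩, le_of_not_ge hcx⟩)
  -- K has no max
  have hgt : ∀ i : K, ∃ b : K, i < b := by
    intro i
    by_contra h
    push_neg at h
    have : (Set.univ : Set K) ⊆ Set.Iic i := fun x _ => h x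
    have := (Cardinal.mk_le_mk_of_subset this).trans_lt (hIic i)
    rw [Cardinal.mk_univ] at this
    exact absurd this (lt_irrefl _)
  -- for each coordinate, B's values are bounded
  have main : ∀ i : K, ∃ ub : K, ∀ y ∈ B, y i ≤ ub := by
    intro i
    obtain ⟨b, hb⟩ := hgt i
    set U : K → Set (K → K) := fun c => {x | x i = c} with hU
    have hUopen : ∀ c, IsOpen[bTop K K] (U c) := by
      intro c
      letI := bTop K K
      have : U c = ⋃₀ {V | ∃ s : K → K, s i = c ∧ V = {x | ∀ j, j < b → x j = s j}} := by
        ext x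
        constructor
        · intro hx
          exact ⟨{y | ∀ j, j < b → y j = x j}, ⟨x, hx, rfl⟩, fun j _ => rfl⟩
        · rintro ⟨V, ⟨s, hs, rfl⟩, hxV⟩
          have := hxV i hb
          simpa [hU, this] using hs
      rw [this]
      refine isOpen_sUnion ?_
      rintro V ⟨s, _, rfl⟩
      exact TopologicalSpace.isOpen_generateFrom_of_mem ⟨b, s, rfl⟩
    have hUinj : Function.Injective U := by
      intro c c' h
      have : (fun _ : K => c) ∈ U c := rfl
      rw [h] at this
      exact this
    obtain ⟨𝒱, h𝒱sub, h𝒱card, h𝒱cov⟩ :=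
      hB {V | ∃ c : K, V = U c}
        (by rintro V ⟨c, rfl⟩; exact hUopen c)
        (fun x hx => ⟨U (x i), ⟨x i, rfl⟩, rfl⟩)
    set S : Set K := {c | U c ∈ 𝒱} with hS
    have hScard : #S < #K := by
      have : Function.Injective (fun c : S => (⟨U c.1, c.2⟩ : 𝒱)) := by
        intro c c' h
        exact Subtype.ext (hUinj (congrArg Subtype.val h))
      exact (Cardinal.mk_le_of_injective this).trans_lt h𝒱card
    obtain ⟨ub, hub⟩ := key S hScard
    refine ⟨ub, fun y hy => ?_⟩
    obtain ⟨V, hV𝒱, hyV⟩ := h𝒱cov hy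
    obtain ⟨c, rfl⟩ := h𝒱sub hV𝒱
    have hyi : y i = c := hyV
    rw [hyi]
    exact hub c hV𝒱
  choose ub hub using main
  exact ⟨ub, fun y hy i => hub i y (hAB hy)⟩
end

section
/- Let κ be an uncountable cardinal with κ = κ^{<κ}. If A ⊆ κ^κ is contained in a K_κ subset of κ^κ, then A is eventually bounded. -/
open Cardinal Set Topology

universe u

/-- A subset of a `K_κ` subset of `K → K` is eventually bounded. -/
theorem eventuallyBounded_of_subset_KK (K : Type u) [LinearOrder K] [WellFoundedLT K]
    (hseg : ∀ b : K, #(Set.Iio b) < #K)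
    (hunc : ℵ₀ < #K) (hpow : Cardinal.powerlt #K #K = #K)
    (A B : Set (K → K)) (hB : IsKK K B) (hAB : A ⊆ B) :
    EvBddSet K A := by
  classical
  have hne : Nonempty K := Cardinal.mk_ne_zero_iff.1 (Cardinal.aleph0_pos.trans hunc).ne'
  obtain ⟨C, hC, rfl⟩ := hB
  -- #K is regular
  have hreg : Cardinal.IsRegular #K := by
    refine ⟨hunc.le, ?_⟩
    by_contra h
    push_neg at h
    have h1 : (#K) < (#K) ^ (#K).ord.cof := Cardinal.lt_power_cof hunc.le
    have h2 : (#K) ^ (#K).ord.cof ≤ Cardinal.powerlt #K #K :=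
      Cardinal.le_powerlt _ h
    rw [hpow] at h2
    exact absurd (h1.trans_le h2) (lt_irrefl _)
  -- closed initial segments are small
  have hIic : ∀ i : K, #(Set.Iic i) < #K := by
    intro i
    rw [← Set.Iio_insert]
    exact Cardinal.mk_insert_le.trans_lt
      (Cardinal.add_lt_of_lt hunc.le (hseg i) (Cardinal.one_lt_aleph0.trans hunc))
  -- every small subset of K is bounded above
  have hbdd : ∀ S : Set K, #S < #K → ∃ m, ∀ a ∈ S, a ≤ m := by
    intro S hS
    by_contra h
    push_neg at h
    have hcov : (Set.univ : Set K) ⊆ ⋃ a : S, Set.Iic (a : K) := by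
      intro k _
      obtain ⟨a, ha, hak⟩ := h k
      exact Set.mem_iUnion.2 ⟨⟨a, ha⟩, hak.le⟩
    have h1 : #K ≤ Cardinal.sum fun a : S => #(Set.Iic (a : K)) :=
      calc #K = #(Set.univ : Set K) := Cardinal.mk_univ.symm
        _ ≤ #(⋃ a : S, Set.Iic (a : K)) := Cardinal.mk_le_mk_of_subset hcov
        _ ≤ _ := Cardinal.mk_iUnion_le_sum_mk
    have h2 : Cardinal.sum (fun a : S => #(Set.Iic (a : K))) < #K :=
      Cardinal.sum_lt_of_isRegular hreg hS fun a => hIic a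
    exact absurd (h1.trans_lt h2) (lt_irrefl _)
  -- K has no maximum
  have hnomax : ∀ i : K, ∃ b : K, i < b := by
    intro i
    by_contra h
    push_neg at h
    have hsub : (Set.univ : Set K) ⊆ Set.Iic i := fun b _ => h b
    have : #K ≤ #(Set.Iic i) :=
      Cardinal.mk_univ.symm.trans_le (Cardinal.mk_le_mk_of_subset hsub)
    exact absurd (this.trans_lt (hIic i)) (lt_irrefl _)
  -- each C b is (fully) bounded
  have hcb : ∀ b : K, ∃ x : K → K, ∀ y ∈ C b, ∀ i, y i ≤ x i := by
    intro b
    have hcoord : ∀ i : K, ∃ m : K, ∀ y ∈ C b, y i ≤ m := by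
      intro i
      obtain ⟨c, hic⟩ := hnomax i
      set 𝒰 : Set (Set (K → K)) :=
        {U | ∃ s : K → K, U = {x | ∀ j, j < c → x j = s j}} with h𝒰
      have hopen : ∀ U ∈ 𝒰, IsOpen[bTop K K] U := by
        intro U hU
        obtain ⟨s, rfl⟩ := hU
        exact TopologicalSpace.isOpen_generateFrom_of_mem ⟨c, s, rfl⟩
      have hcov : C b ⊆ ⋃₀ 𝒰 := by
        intro y _
        exact ⟨{x | ∀ j, j < c → x j = y j}, ⟨y, rfl⟩, fun j _ => rfl⟩
      obtain ⟨𝒱, h𝒱𝒰, h𝒱card, h𝒱cov⟩ := hC b 𝒰 hopen hcov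
      have hval : ∀ V ∈ 𝒱, ∃ a : K, ∀ y ∈ V, y i = a := by
        intro V hV
        obtain ⟨s, rfl⟩ := h𝒱𝒰 hV
        exact ⟨s i, fun y hy => hy i hic⟩
      choose! g hg using hval
      obtain ⟨m, hm⟩ := hbdd (g '' 𝒱) (Cardinal.mk_image_le.trans_lt h𝒱card)
      refine ⟨m, fun y hy => ?_⟩
      obtain ⟨V, hV, hyV⟩ := h𝒱cov hy
      rw [hg V hV y hyV]
      exact hm _ ⟨V, hV, rfl⟩
    choose x hx using hcoord
    exact ⟨x, fun y hy i => hx i y hy⟩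
  choose xf hxf using hcb
  -- diagonal bound
  have hsm : ∀ i : K, ∃ m : K, ∀ b ∈ Set.Iic i, xf b i ≤ m := by
    intro i
    obtain ⟨m, hm⟩ := hbdd ((fun b => xf b i) '' Set.Iic i)
      (Cardinal.mk_image_le.trans_lt (hIic i))
    exact ⟨m, fun b hb => hm _ ⟨b, hb, rfl⟩⟩
  choose x hx using hsm
  refine ⟨x, fun y hy => ?_⟩
  obtain ⟨b, hb⟩ := Set.mem_iUnion.1 (hAB hy)
  exact ⟨b, fun i hbi => (hxf b y hb i).trans (hx i b hbi)⟩
end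

section
/- Let κ be a weakly compact cardinal. A subset A of κ^κ is contained in a κ-compact subset of κ^κ if and only if A is bounded, and A is contained in a K_κ subset of κ^κ if and only if A is eventually bounded. -/
open Cardinal Set Topology

universe u

section Aux
set_option linter.unusedSectionVars false

open Set TopologicalSpace

variable {K : Type u} [LinearOrder K]

lemma aux_power_lt {κ a b : Cardinal.{u}} (h : κ.IsInaccessible) (ha : a < κ) (hb : b < κ) :
    a ^ b < κ := by
  calc a ^ b ≤ (2 ^ a) ^ b := Cardinal.power_le_power_right (Cardinal.cantor a).le
    _ = 2 ^ (a * b) := by rw [← Cardinal.power_mul]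
    _ < κ := h.isStrongPrelimit (Cardinal.mul_lt_of_lt h.1.le ha hb)

variable (hseg : ∀ b : K, #(Set.Iio b) < #K) (hin : (#K).IsInaccessible)

include hin in
lemma aux_nonempty : Nonempty K :=
  Cardinal.mk_ne_zero_iff.1 (Cardinal.aleph0_pos.trans hin.1).ne'

include hseg hin in
lemma aux_exists_gt (b : K) : ∃ c, b < c := by
  by_contra h
  push_neg at h
  have hsub : (Set.univ : Set K) ⊆ Set.Iic b := fun c _ => h c
  have h1 : #K ≤ #(Set.Iic b) := by
    simpa using Cardinal.mk_le_mk_of_subset hsub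
  have h2 : #(Set.Iic b) < #K := by
    rw [← Set.Iio_insert]
    exact Cardinal.mk_insert_le.trans_lt
      (Cardinal.add_lt_of_lt hin.1.le (hseg b) (Cardinal.one_lt_aleph0.trans hin.1))
  exact absurd h1 h2.not_ge

include hseg hin in
lemma aux_Iic_lt (b : K) : #(Set.Iic b) < #K := by
  rw [← Set.Iio_insert]
  exact Cardinal.mk_insert_le.trans_lt
    (Cardinal.add_lt_of_lt hin.1.le (hseg b) (Cardinal.one_lt_aleph0.trans hin.1))

include hseg hin in
lemma aux_exists_ub (S : Set K) (hS : #S < #K) : ∃ b, ∀ c ∈ S, c ≤ b := by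
  by_contra h
  push_neg at h
  have hcov : (Set.univ : Set K) ⊆ ⋃ c : S, Set.Iio c.1 := by
    intro b _
    obtain ⟨c, hc, hbc⟩ := h b
    exact Set.mem_iUnion.2 ⟨⟨c, hc⟩, hbc⟩
  have h1 : #K ≤ #(⋃ c : S, Set.Iio c.1) := by
    simpa using Cardinal.mk_le_mk_of_subset hcov
  have h2 : #(⋃ c : S, Set.Iio c.1) < #K :=
    (Cardinal.mk_iUnion_le _).trans_lt
      (Cardinal.mul_lt_of_lt hin.1.le hS
        (Cardinal.iSup_lt_of_isRegular hin.isRegular hS fun c => hseg c.1))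
  exact absurd h1 h2.not_ge

include hin in
lemma aux_small_iUnion {ι X : Type u} (f : ι → Set X) (hι : #ι < #K)
    (hf : ∀ i, #(f i) < #K) : #(⋃ i, f i) < #K :=
  (Cardinal.mk_iUnion_le _).trans_lt
    (Cardinal.mul_lt_of_lt hin.1.le hι (Cardinal.iSup_lt_of_isRegular hin.isRegular hι hf))

include hseg hin in
lemma aux_small_bdd_fns (b : K) (f : Set.Iio b → K) :
    #{t : Set.Iio b → K | ∀ i, t i ≤ f i} < #K := by
  obtain ⟨m, hm⟩ := aux_exists_ub hseg hin (Set.range f) (Cardinal.mk_range_le.trans_lt (hseg b))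
  have hinj : Function.Injective
      (fun t : {t : Set.Iio b → K | ∀ i, t i ≤ f i} =>
        (fun i => ⟨t.1 i, (t.2 i).trans (hm _ ⟨i, rfl⟩)⟩ : Set.Iio b → Set.Iic m)) := by
    intro t t' ht
    ext i
    exact congrArg Subtype.val (congrFun ht i)
  have h1 : #{t : Set.Iio b → K | ∀ i, t i ≤ f i} ≤ #(Set.Iio b → Set.Iic m) :=
    Cardinal.mk_le_of_injective hinj
  refine h1.trans_lt ?_
  rw [← Cardinal.power_def]
  exact aux_power_lt hin (aux_Iic_lt hseg hin m) (hseg b)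

end Aux
section Aux2
set_option linter.unusedSectionVars false
open Set TopologicalSpace

variable {K : Type u} [LinearOrder K]

lemma aux_basic_open {Y : Type u} (b : K) (s : K → Y) :
    IsOpen[bTop K Y] {x : K → Y | ∀ i, i < b → x i = s i} :=
  isOpen_generateFrom_of_mem ⟨b, s, rfl⟩

lemma aux_exists_basic_nbhd {Y : Type u} (hK : Nonempty K) {U : Set (K → Y)}
    (hU : IsOpen[bTop K Y] U) :
    ∀ y ∈ U, ∃ b : K, {z : K → Y | ∀ i, i < b → z i = y i} ⊆ U := by
  have hU' : TopologicalSpace.GenerateOpen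
      {U | ∃ (b : K) (s : K → Y), U = {x | ∀ i, i < b → x i = s i}} U := hU
  clear hU
  induction hU' with
  | basic V hV =>
    rintro y hy
    obtain ⟨b, s, rfl⟩ := hV
    exact ⟨b, fun z hz i hi => (hz i hi).trans (hy i hi)⟩
  | univ => exact fun y _ => ⟨Classical.arbitrary K, Set.subset_univ _⟩
  | inter U V _ _ ihU ihV =>
    rintro y ⟨hyU, hyV⟩
    obtain ⟨b₁, h₁⟩ := ihU y hyU
    obtain ⟨b₂, h₂⟩ := ihV y hyV
    exact ⟨max b₁ b₂, fun z hz =>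
      ⟨h₁ fun i hi => hz i (hi.trans_le (le_max_left _ _)),
       h₂ fun i hi => hz i (hi.trans_le (le_max_right _ _))⟩⟩
  | sUnion S _ ih =>
    rintro y ⟨V, hV, hyV⟩
    obtain ⟨b, hb⟩ := ih V hV y hyV
    exact ⟨b, fun z hz => ⟨V, hV, hb hz⟩⟩

lemma aux_isOpen_compl_cyl {Y : Type u} (b : K) (t : Set.Iio b → Y) :
    IsOpen[bTop K Y] {x : K → Y | ∀ i : Set.Iio b, x i.1 = t i}ᶜ := by
  letI := bTop K Y
  have : {x : K → Y | ∀ i : Set.Iio b, x i.1 = t i}ᶜ =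
      ⋃₀ {U | ∃ s : K → Y, (∃ i : Set.Iio b, s i.1 ≠ t i) ∧
        U = {x | ∀ i, i < b → x i = s i}} := by
    ext x
    constructor
    · intro hx
      simp only [Set.mem_compl_iff, Set.mem_setOf_eq, not_forall] at hx
      obtain ⟨i, hi⟩ := hx
      exact ⟨_, ⟨x, ⟨i, hi⟩, rfl⟩, fun j _ => rfl⟩
    · rintro ⟨U, ⟨s, ⟨i, hi⟩, rfl⟩, hxU⟩
      intro hx
      exact hi ((hxU i.1 i.2).symm.trans (hx i))
  rw [this]
  exact isOpen_sUnion fun U hU => by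
    obtain ⟨s, _, rfl⟩ := hU
    exact aux_basic_open b s

lemma aux_isOpen_val (hK : ∀ b : K, ∃ c, b < c) (i : K) (a : K) :
    IsOpen[bTop K K] {z : K → K | z i = a} := by
  letI := bTop K K
  obtain ⟨b, hb⟩ := hK i
  have : {z : K → K | z i = a} =
      ⋃₀ {U | ∃ s : K → K, s i = a ∧ U = {x | ∀ j, j < b → x j = s j}} := by
    ext z
    constructor
    · intro hz
      exact ⟨_, ⟨z, hz, rfl⟩, fun j _ => rfl⟩
    · rintro ⟨U, ⟨s, hs, rfl⟩, hzU⟩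
      exact (hzU i hb).trans hs
  rw [this]
  exact isOpen_sUnion fun U hU => by
    obtain ⟨s, _, rfl⟩ := hU
    exact aux_basic_open b s

lemma aux_kCompact_diff {B W : Set (K → K)} (hB : KCompact K B) (hW : IsOpen[bTop K K] W) :
    KCompact K (B \ W) := by
  intro 𝒰 hop hcov
  obtain ⟨𝒱, h𝒱, hcard, hcov'⟩ := hB (insert W 𝒰)
    (by rintro U (rfl | h); exacts [hW, hop U h])
    (by
      intro y hy
      by_cases hyW : y ∈ W
      · exact ⟨W, Set.mem_insert _ _, hyW⟩
      · obtain ⟨U, hU, hyU⟩ := hcov ⟨hy, hyW⟩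
        exact ⟨U, Set.mem_insert_of_mem _ hU, hyU⟩)
  refine ⟨𝒱 ∩ 𝒰, Set.inter_subset_right, ?_, ?_⟩
  · exact (Cardinal.mk_le_mk_of_subset Set.inter_subset_left).trans_lt hcard
  · rintro y ⟨hyB, hyW⟩
    obtain ⟨V, hV, hyV⟩ := hcov' hyB
    rcases h𝒱 hV with rfl | hVU
    · exact absurd hyV hyW
    · exact ⟨V, ⟨hV, hVU⟩, hyV⟩

end Aux2
section Aux3
set_option linter.unusedSectionVars false
open Set TopologicalSpace

variable {K : Type u} [LinearOrder K]
variable (hseg : ∀ b : K, #(Set.Iio b) < #K) (hin : (#K).IsInaccessible)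

include hseg hin in
lemma aux_kCompact_box (htp : TreeProp K) (g : K → K) :
    KCompact K {y : K → K | ∀ i, y i ≤ g i} := by
  have hK : Nonempty K := aux_nonempty hin
  intro 𝒰 hop hcov
  by_contra hno
  push_neg at hno
  -- `ext p` is the set of branches of the box extending the node `p`
  set ext : Nd K K → Set (K → K) := fun p =>
    {y | (∀ j, y j ≤ g j) ∧ ∀ i : Set.Iio p.1, y i.1 = p.2 i} with hext
  -- the tree of "bad" nodes
  set T : Set (Nd K K) := {p | (∀ i : Set.Iio p.1, p.2 i ≤ g i.1) ∧
    ∀ 𝒱 ⊆ 𝒰, #𝒱 < #K → ¬ (ext p ⊆ ⋃₀ 𝒱)} with hT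
  have hSub : IsSubtree K T := by
    rintro p ⟨hbd, hbad⟩ c h
    refine ⟨fun i => hbd ⟨i.1, lt_of_lt_of_le i.2 h⟩, ?_⟩
    intro 𝒱 hsub hcard hcov'
    refine hbad 𝒱 hsub hcard ?_
    intro y hy
    exact hcov' ⟨hy.1, fun i => hy.2 ⟨i.1, lt_of_lt_of_le i.2 h⟩⟩
  have hKT : KTree K T := by
    constructor
    · intro b
      by_contra hb
      push_neg at hb
      have hgood : ∀ t : {t : Set.Iio b → K // ∀ i, t i ≤ g i.1},
          ∃ 𝒱, 𝒱 ⊆ 𝒰 ∧ #𝒱 < #K ∧ ext ⟨b, t.1⟩ ⊆ ⋃₀ 𝒱 := by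
        intro t
        have h1 := hb t.1
        rw [hT, Set.mem_setOf_eq] at h1
        have h2 : ¬ ∀ 𝒱 ⊆ 𝒰, #𝒱 < #K → ¬ (ext ⟨b, t.1⟩ ⊆ ⋃₀ 𝒱) :=
          fun hB => h1 ⟨t.2, hB⟩
        push_neg at h2
        exact h2
      choose V hVsub hVcard hVcov using hgood
      refine hno (⋃ t, V t) (Set.iUnion_subset hVsub) ?_ ?_
      · refine aux_small_iUnion hin V ?_ hVcard
        have := aux_small_bdd_fns hseg hin b (fun i => g i.1)
        exact this.trans_le le_rfl |>.trans_le le_rfl |> fun h => by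
          exact h
      · intro y hy
        have hmem : y ∈ ext ⟨b, fun i => y i.1⟩ := ⟨hy, fun i => rfl⟩
        obtain ⟨U, hU, hyU⟩ := hVcov ⟨fun i => y i.1, fun i => hy i.1⟩ hmem
        exact ⟨U, Set.mem_iUnion.2 ⟨_, hU⟩, hyU⟩
    · intro b
      have hsub2 : {t : Set.Iio b → K | (⟨b, t⟩ : Nd K K) ∈ T} ⊆
          {t : Set.Iio b → K | ∀ i, t i ≤ g i.1} := fun t ht => ht.1
      exact (Cardinal.mk_le_mk_of_subset hsub2).trans_lt
        (aux_small_bdd_fns hseg hin b (fun i => g i.1))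
  obtain ⟨y, hy⟩ := htp T hSub hKT
  have hybox : ∀ i, y i ≤ g i := by
    intro i
    obtain ⟨b, hb⟩ := aux_exists_gt hseg hin i
    exact (hy b).1 ⟨i, hb⟩
  obtain ⟨U, hU, hyU⟩ := hcov hybox
  obtain ⟨b, hb⟩ := aux_exists_basic_nbhd hK (hop U hU) y hyU
  refine (hy b).2 {U} (by simpa using hU) ?_ ?_
  · simpa using Cardinal.one_lt_aleph0.trans_le hin.1.le
  · intro z hz
    refine ⟨U, rfl, hb ?_⟩
    intro i hi
    exact hz.2 ⟨i, hi⟩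

end Aux3
section Aux4
set_option linter.unusedSectionVars false
open Set TopologicalSpace

variable {K : Type u} [LinearOrder K]
variable (hseg : ∀ b : K, #(Set.Iio b) < #K) (hin : (#K).IsInaccessible)

include hseg hin in
lemma aux_bdd_of_kCompact {B : Set (K → K)} (hB : KCompact K B) : BddSet K B := by
  have hgt : ∀ b : K, ∃ c, b < c := aux_exists_gt hseg hin
  have hbd : ∀ i : K, ∃ m : K, ∀ y ∈ B, y i ≤ m := by
    intro i
    have hopen : ∀ U ∈ {U | ∃ c : K, U = {z : K → K | z i < c}}, IsOpen[bTop K K] U := by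
      rintro U ⟨c, rfl⟩
      letI := bTop K K
      have : {z : K → K | z i < c} = ⋃₀ {V | ∃ a, a < c ∧ V = {z : K → K | z i = a}} := by
        ext z
        constructor
        · intro hz
          exact ⟨_, ⟨z i, hz, rfl⟩, rfl⟩
        · rintro ⟨V, ⟨a, ha, rfl⟩, hzV⟩
          have h2 : z i = a := hzV
          show z i < c
          rw [h2]
          exact ha
      rw [this]
      exact isOpen_sUnion fun V hV => by
        obtain ⟨a, _, rfl⟩ := hV
        exact aux_isOpen_val hgt i a
    obtain ⟨𝒱, hsub, hcard, hcov⟩ := hB _ hopen (by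
      intro y _
      obtain ⟨c, hc⟩ := hgt (y i)
      exact ⟨{z | z i < c}, ⟨c, rfl⟩, hc⟩)
    have hchoice : ∀ V : 𝒱, ∃ c : K, V.1 = {z : K → K | z i < c} := fun V => hsub V.2
    choose cV hcV using hchoice
    obtain ⟨m, hm⟩ := aux_exists_ub hseg hin (Set.range cV) (Cardinal.mk_range_le.trans_lt hcard)
    refine ⟨m, fun y hy => ?_⟩
    obtain ⟨V, hV, hyV⟩ := hcov hy
    have h2 : y ∈ {z : K → K | z i < cV ⟨V, hV⟩} := (hcV ⟨V, hV⟩) ▸ hyV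
    exact h2.le.trans (hm _ ⟨⟨V, hV⟩, rfl⟩)
  choose x hx using hbd
  exact ⟨x, fun y hy i => hx i y hy⟩

include hseg hin in
lemma aux_mk_arrow_le (b : K) : #(Set.Iio b → K) ≤ #K := by
  have hcov : (Set.univ : Set (Set.Iio b → K)) ⊆
      ⋃ m : K, {t : Set.Iio b → K | ∀ i, t i ≤ m} := by
    intro t _
    obtain ⟨m, hm⟩ := aux_exists_ub hseg hin (Set.range t)
      (Cardinal.mk_range_le.trans_lt (hseg b))
    exact Set.mem_iUnion.2 ⟨m, fun i => hm _ ⟨i, rfl⟩⟩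
  have h1 : #(Set.Iio b → K) ≤ #(⋃ m : K, {t : Set.Iio b → K | ∀ i, t i ≤ m}) := by
    simpa using Cardinal.mk_le_mk_of_subset hcov
  refine h1.trans ((Cardinal.mk_iUnion_le _).trans ?_)
  calc #K * ⨆ m : K, #{t : Set.Iio b → K | ∀ i, t i ≤ m}
      ≤ #K * #K := by
        refine mul_le_mul_right (ciSup_le' fun m => ?_) _
        exact (aux_small_bdd_fns hseg hin b (fun _ => m)).le
    _ = #K := Cardinal.mul_eq_self hin.1.le

include hseg hin in
lemma aux_mk_Nd_le : #(Nd K K) ≤ #K := by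
  rw [show #(Nd K K) = Cardinal.sum fun b : K => #(Set.Iio b → K) from Cardinal.mk_sigma _]
  refine (Cardinal.sum_le_mk_mul_iSup _).trans ?_
  calc #K * ⨆ b : K, #(Set.Iio b → K)
      ≤ #K * #K := mul_le_mul_right (ciSup_le' fun b => aux_mk_arrow_le hseg hin b) _
    _ = #K := Cardinal.mul_eq_self hin.1.le

end Aux4
section Aux5
set_option linter.unusedSectionVars false
open Set TopologicalSpace

variable {K : Type u} [LinearOrder K]
variable (hseg : ∀ b : K, #(Set.Iio b) < #K) (hin : (#K).IsInaccessible)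

include hseg hin in
lemma aux_kCompact_E (htp : TreeProp K) (p : Nd K K) (x : K → K) :
    KCompact K {y : K → K | (∀ i : Set.Iio p.1, y i.1 = p.2 i) ∧
      ∀ i, p.1 ≤ i → y i ≤ x i} := by
  set g : K → K := fun i => if h : i < p.1 then p.2 ⟨i, h⟩ else x i with hg
  have hEq : {y : K → K | (∀ i : Set.Iio p.1, y i.1 = p.2 i) ∧
      ∀ i, p.1 ≤ i → y i ≤ x i} =
      {y : K → K | ∀ i, y i ≤ g i} \ {y : K → K | ∀ i : Set.Iio p.1, y i.1 = p.2 i}ᶜ := by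
    ext y
    constructor
    · rintro ⟨h1, h2⟩
      refine ⟨fun i => ?_, not_not.2 h1⟩
      by_cases h : i < p.1
      · rw [hg]
        simp only [dif_pos h]
        exact (h1 ⟨i, h⟩).le
      · rw [hg]
        simp only [dif_neg h]
        exact h2 i (not_lt.1 h)
    · rintro ⟨hbox, h2⟩
      refine ⟨not_not.1 h2, fun i hi => ?_⟩
      have h3 := hbox i
      rw [hg] at h3
      simpa only [dif_neg (not_lt.2 hi)] using h3
  rw [hEq]
  exact aux_kCompact_diff (aux_kCompact_box hseg hin htp g) (aux_isOpen_compl_cyl p.1 p.2)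

end Aux5
/-- For weakly compact `K`: `A` is contained in a κ-compact set iff it is
bounded, and `A` is contained in a `K_κ` set iff it is eventually bounded. -/
theorem weaklyCompact_bounded_characterizations (K : Type u) [LinearOrder K]
    [WellFoundedLT K] (hseg : ∀ b : K, #(Set.Iio b) < #K)
    (hwc : WComp K) (A : Set (K → K)) :
    ((∃ B, KCompact K B ∧ A ⊆ B) ↔ BddSet K A) ∧
    ((∃ B, IsKK K B ∧ A ⊆ B) ↔ EvBddSet K A) := by
  obtain ⟨hin, htp⟩ := hwc
  have hK : Nonempty K := aux_nonempty hin
  constructor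
  · constructor
    · rintro ⟨B, hB, hAB⟩
      obtain ⟨x, hx⟩ := aux_bdd_of_kCompact hseg hin hB
      exact ⟨x, fun y hy => hx y (hAB hy)⟩
    · rintro ⟨x, hx⟩
      exact ⟨{y | ∀ i, y i ≤ x i}, aux_kCompact_box hseg hin htp x,
        fun y hy i => hx y hy i⟩
  · constructor
    · rintro ⟨B, ⟨C, hC, rfl⟩, hAB⟩
      have hxb : ∀ b : K, ∃ xb : K → K, ∀ y ∈ C b, ∀ i, y i ≤ xb i := fun b =>
        aux_bdd_of_kCompact hseg hin (hC b)
      choose xb hxb using hxb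
      have hx : ∀ i : K, ∃ m, ∀ b : K, b ≤ i → xb b i ≤ m := by
        intro i
        obtain ⟨m, hm⟩ := aux_exists_ub hseg hin
          (Set.range fun b : Set.Iic i => xb b.1 i)
          (Cardinal.mk_range_le.trans_lt (aux_Iic_lt hseg hin i))
        exact ⟨m, fun b hb => hm _ ⟨⟨b, hb⟩, rfl⟩⟩
      choose x hx using hx
      refine ⟨x, fun y hy => ?_⟩
      obtain ⟨b, hyb⟩ := Set.mem_iUnion.1 (hAB hy)
      exact ⟨b, fun i hbi => (hxb b y hyb i).trans (hx i b hbi)⟩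
    · rintro ⟨x, hx⟩
      have hne : Nonempty (Nd K K) := ⟨⟨Classical.arbitrary K, fun i => i.1⟩⟩
      obtain ⟨f⟩ := (Cardinal.le_def _ _).1 (aux_mk_Nd_le hseg hin)
      have hs : Function.Surjective (Function.invFun f) :=
        Function.invFun_surjective f.injective
      refine ⟨⋃ c : K, {y : K → K |
          (∀ i : Set.Iio (Function.invFun f c).1, y i.1 = (Function.invFun f c).2 i) ∧
          ∀ i, (Function.invFun f c).1 ≤ i → y i ≤ x i},
        ⟨_, fun c => aux_kCompact_E hseg hin htp (Function.invFun f c) x, rfl⟩, ?_⟩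
      intro y hy
      obtain ⟨b, hb⟩ := hx y hy
      obtain ⟨c, hc⟩ := hs ⟨b, fun i => y i.1⟩
      refine Set.mem_iUnion.2 ⟨c, ?_⟩
      simp only [Set.mem_setOf_eq]
      rw [hc]
      exact ⟨fun i => rfl, hb⟩
end

section
/- Let κ be an uncountable cardinal with κ = κ^{<κ}. If S ⊆ κ^{<κ} is a κ-Miller tree, then [S] is a closed subset of κ^κ homeomorphic to κ^κ. -/
open Cardinal Set Topology

universe u

set_option linter.unusedSectionVars false

namespace MB

open Order

variable {K : Type u} [LinearOrder K] [WellFoundedLT K]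

/-- agreement below `b` -/
def agr (x y : K → K) (b : K) : Prop := ∀ i, i < b → x i = y i

lemma agr.symm {x y : K → K} {b : K} (h : agr x y b) : agr y x b :=
  fun i hi => (h i hi).symm

lemma agr.mono {x y : K → K} {b c : K} (h : agr x y b) (hc : c ≤ b) : agr x y c :=
  fun i hi => h i (lt_of_lt_of_le hi hc)

lemma agr.trans {x y z : K → K} {b : K} (h : agr x y b) (h' : agr y z b) : agr x z b :=
  fun i hi => (h i hi).trans (h' i hi)

lemma xRes_eq_of_agr {x y : K → K} {b : K} (h : agr x y b) : xRes K x b = xRes K y b :=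
  congrArg (Sigma.mk b) (funext fun i => h i.1 i.2)

variable (S : Set (Nd K K))

/-- functional membership -/
def inS (x : K → K) (b : K) : Prop := xRes K x b ∈ S

lemma inS_of_agr {x y : K → K} {b : K} (h : agr x y b) (hx : inS S x b) : inS S y b := by
  unfold inS at *; rwa [← xRes_eq_of_agr h]

lemma inS_mono (hT : IsSubtree K S) {x : K → K} {b : K} (h : inS S x b) {c : K} (hc : c ≤ b) :
    inS S x c := hT _ h c hc

lemma inS_limit (hsc : Superclosed K S) {x : K → K} {b : K} (hb : IsLimElt K b)
    (h : ∀ c, c < b → inS S x c) : inS S x b := hsc (xRes K x b) hb (fun c hc => h c hc)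

variable [SuccOrder K]

/-- functional splitting values -/
def sv (x : K → K) (b : K) : Set K :=
  {a | ∃ y : K → K, agr y x b ∧ y b = a ∧ inS S y (Order.succ b)}

lemma splitVals_subset_sv (hT : IsSubtree K S) (x : K → K) (b : K) :
    splitVals K S (xRes K x b) ⊆ sv S x b := by
  rintro a ⟨q, hq, h, hagr, hval⟩
  have hb : b < q.1 := h
  refine ⟨fun i => if hi : i < q.1 then q.2 ⟨i, hi⟩ else x i, ?_, ?_, ?_⟩
  · intro i hi
    have hi' : i < q.1 := hi.trans hb
    show (if hi : i < q.1 then q.2 ⟨i, hi⟩ else x i) = x i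
    rw [dif_pos hi']
    exact hagr ⟨i, hi⟩
  · show (if hi : b < q.1 then q.2 ⟨b, hi⟩ else x b) = a
    rw [dif_pos hb]
    exact hval
  · have hle : Order.succ b ≤ q.1 := Order.succ_le_of_lt hb
    have : xRes K (fun i => if hi : i < q.1 then q.2 ⟨i, hi⟩ else x i) (Order.succ b)
        = ndRes K q (Order.succ b) hle := by
      refine congrArg (Sigma.mk _) (funext fun i => ?_)
      have hi' : i.1 < q.1 := lt_of_lt_of_le i.2 hle
      show (if hh : i.1 < q.1 then q.2 ⟨i.1, hh⟩ else x i.1) = _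
      rw [dif_pos hi']
    unfold inS; rw [this]; exact hT q hq _ hle

/-- functional splitting -/
def splitF (x : K → K) (b : K) : Prop := #K ≤ #(sv S x b)

lemma miller_ext (hS : MillerTree K S) {x : K → K} {b : K} (h : inS S x b) :
    ∃ (c : K) (y : K → K), b ≤ c ∧ agr y x b ∧ inS S y c ∧ splitF S y c := by
  obtain ⟨q, hq, ⟨hle, hagr⟩, hsplit⟩ := hS.2.2.2 (xRes K x b) h
  have hle' : b ≤ q.1 := hle
  have key : xRes K (fun i => if hi : i < q.1 then q.2 ⟨i, hi⟩ else x i) q.1 = q := by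
    have h2 : (fun i : Set.Iio q.1 =>
        (fun j => if hj : j < q.1 then q.2 ⟨j, hj⟩ else x j) i.1) = q.2 := by
      refine funext fun i => ?_
      show (if hj : i.1 < q.1 then q.2 ⟨i.1, hj⟩ else x i.1) = q.2 i
      have hi : i.1 < q.1 := i.2
      rw [dif_pos hi]
    exact congrArg (Sigma.mk q.1) h2
  refine ⟨q.1, fun i => if hi : i < q.1 then q.2 ⟨i, hi⟩ else x i, hle', ?_, ?_, ?_⟩
  · intro i hi
    have hi' : i < q.1 := lt_of_lt_of_le hi hle'
    show (if hh : i < q.1 then q.2 ⟨i, hh⟩ else x i) = x i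
    rw [dif_pos hi']
    exact hagr ⟨i, hi⟩
  · unfold inS; rw [key]; exact hq
  · unfold splitF
    rw [← key] at hsplit
    exact hsplit.trans (Cardinal.mk_le_mk_of_subset (splitVals_subset_sv S hS.2.1 _ _))

open scoped Classical in
/-- one Miller extension step, as a choice function -/
noncomputable def step (l : K) (z : K → K) : K × (K → K) :=
  if h : ∃ p : K × (K → K), l ≤ p.1 ∧ agr p.2 z l ∧ inS S p.2 p.1 ∧ splitF S p.2 p.1
  then h.choose else (l, z)

lemma step_spec (hS : MillerTree K S) {l : K} {z : K → K} (h : inS S z l) :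
    l ≤ (step S l z).1 ∧ agr (step S l z).2 z l ∧ inS S (step S l z).2 (step S l z).1 ∧
      splitF S (step S l z).2 (step S l z).1 := by
  have hex : ∃ p : K × (K → K), l ≤ p.1 ∧ agr p.2 z l ∧ inS S p.2 p.1 ∧ splitF S p.2 p.1 := by
    obtain ⟨c, y, h1, h2, h3, h4⟩ := miller_ext S hS h
    exact ⟨(c, y), h1, h2, h3, h4⟩
  rw [step, dif_pos hex]
  exact hex.choose_spec


section Cardinal

variable {K : Type u} [LinearOrder K] [WellFoundedLT K]

lemma regK (hunc : ℵ₀ < #K) (hpow : Cardinal.powerlt #K #K = #K) : (#K).IsRegular := by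
  refine ⟨hunc.le, ?_⟩
  by_contra hcof
  push_neg at hcof
  have h1 : #K < #K ^ (#K).ord.cof := Cardinal.lt_power_cof hunc.le
  have h2 : (#K) ^ (#K).ord.cof ≤ Cardinal.powerlt #K #K := Cardinal.le_powerlt _ hcof
  rw [hpow] at h2
  exact absurd (h1.trans_le h2) (lt_irrefl _)

lemma noMax (hseg : ∀ b : K, #(Set.Iio b) < #K) (hunc : ℵ₀ < #K) (b : K) : ∃ c, b < c := by
  by_contra h
  push_neg at h
  have hsub : (Set.univ : Set K) ⊆ insert b (Set.Iio b) := by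
    intro x _
    rcases lt_or_eq_of_le (h x) with h' | h'
    · exact Set.mem_insert_iff.2 (Or.inr h')
    · exact Set.mem_insert_iff.2 (Or.inl h')
  have h1 : #K ≤ #(insert b (Set.Iio b) : Set K) := by
    rw [← Cardinal.mk_univ (α := K)]
    exact Cardinal.mk_le_mk_of_subset hsub
  have h2 : #(insert b (Set.Iio b) : Set K) ≤ #(Set.Iio b) + 1 := Cardinal.mk_insert_le
  have h3 : #(Set.Iio b) + 1 < #K :=
    Cardinal.add_lt_of_lt hunc.le (hseg b) (Cardinal.one_lt_aleph0.trans hunc)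
  exact absurd ((h1.trans h2).trans_lt h3) (lt_irrefl _)

lemma nonemptyK (hunc : ℵ₀ < #K) : Nonempty K := by
  have h0 : (0 : Cardinal) < #K := lt_trans Cardinal.aleph0_pos hunc
  exact Cardinal.mk_ne_zero_iff.1 h0.ne'

lemma Iic_small (hseg : ∀ b : K, #(Set.Iio b) < #K) (hnm : ∀ b : K, ∃ c, b < c) (a : K) :
    #(Set.Iic a) < #K := by
  obtain ⟨c, hc⟩ := hnm a
  refine lt_of_le_of_lt (Cardinal.mk_le_mk_of_subset ?_) (hseg c)
  intro x hx
  exact lt_of_le_of_lt hx hc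

lemma bddAbove' (hreg : (#K).IsRegular) (hseg : ∀ b : K, #(Set.Iio b) < #K)
    (hnm : ∀ b : K, ∃ c, b < c) (A : Set K) (hA : #A < #K) : (upperBounds A).Nonempty := by
  by_contra h
  have hcov : (Set.univ : Set K) ⊆ ⋃ a : A, Set.Iic (a : K) := by
    intro x _
    by_contra hx
    simp only [Set.mem_iUnion, Set.mem_Iic, not_exists, not_le] at hx
    exact h ⟨x, fun a ha => (hx ⟨a, ha⟩).le⟩
  have h1 : #K ≤ #(⋃ a : A, Set.Iic (a : K)) := by
    rw [← Cardinal.mk_univ (α := K)]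
    exact Cardinal.mk_le_mk_of_subset hcov
  have h2 : #(⋃ a : A, Set.Iic (a : K)) ≤ #A * ⨆ a : A, #(Set.Iic (a : K)) :=
    Cardinal.mk_iUnion_le _
  have h3 : (⨆ a : A, #(Set.Iic (a : K))) < #K :=
    Cardinal.iSup_lt_of_isRegular hreg hA fun a => Iic_small hseg hnm _
  have h4 : #A * (⨆ a : A, #(Set.Iic (a : K))) < #K :=
    Cardinal.mul_lt_of_lt hreg.1 hA h3
  exact absurd ((h1.trans h2).trans_lt h4) (lt_irrefl _)

open scoped Classical in
/-- least upper bound in a well-order -/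
noncomputable def lub [Nonempty K] (A : Set K) : K :=
  if h : (upperBounds A).Nonempty then (wellFounded_lt (α := K)).min (upperBounds A) h
  else Classical.arbitrary K

lemma le_lub [Nonempty K] {A : Set K} (h : (upperBounds A).Nonempty) {a : K} (ha : a ∈ A) :
    a ≤ lub A := by
  rw [lub, dif_pos h]
  exact (wellFounded_lt (α := K)).min_mem (upperBounds A) h ha

lemma lub_le [Nonempty K] {A : Set K} {m : K} (hm : m ∈ upperBounds A) : lub A ≤ m := by
  rw [lub, dif_pos ⟨m, hm⟩]
  exact WellFounded.min_le _ hm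

end Cardinal

section DD

variable {K : Type u} [LinearOrder K] [WellFoundedLT K] [SuccOrder K] [NoMaxOrder K]
  (S : Set (Nd K K))

/-- the index set for the partition of the cone over a node of length `l`
determined by a splitting node `(c, y)` above it -/
def Dset (l c : K) (y : K → K) : Set (K × K) :=
  {q | (l ≤ q.1 ∧ q.1 < c ∧ q.2 ≠ y q.1 ∧ inS S (Function.update y q.1 q.2) (Order.succ q.1))
     ∨ (q.1 = c ∧ q.2 ∈ sv S y c)}

lemma Dset_fst_le {l c : K} {y : K → K} {q : K × K} (hq : q ∈ Dset S l c y) : q.1 ≤ c := by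
  rcases hq with h | h
  · exact h.2.1.le
  · exact h.1.le

lemma Dcard (hreg : (#K).IsRegular) (hseg : ∀ b : K, #(Set.Iio b) < #K)
    {l c : K} {y : K → K} (hsplit : splitF S y c) : #K = #(Dset S l c y) := by
  apply le_antisymm
  · refine hsplit.trans (Cardinal.mk_le_of_injective
      (f := fun a : sv S y c => (⟨(c, a.1), Or.inr ⟨rfl, a.2⟩⟩ : Dset S l c y)) ?_)
    intro a a' h
    apply Subtype.ext
    have := congrArg (fun z : Dset S l c y => (z : K × K).2) h
    exact this
  · have hinj : #(Dset S l c y) ≤ #(Set.Iic c × K) := Cardinal.mk_le_of_injective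
      (f := fun q : Dset S l c y => ((⟨q.1.1, Dset_fst_le S q.2⟩ : Set.Iic c), q.1.2)) ?_
    · refine hinj.trans ?_
      rw [Cardinal.mk_prod, Cardinal.lift_id, Cardinal.lift_id]
      calc #(Set.Iic c) * #K ≤ #K * #K :=
            mul_le_mul_left (Iic_small hseg (fun b => exists_gt b) c).le _
        _ = #K := Cardinal.mul_eq_self hreg.1
    · intro q q' h
      apply Subtype.ext
      have h1 := congrArg (fun z : Set.Iic c × K => (z.1 : K)) h
      have h2 := congrArg (fun z : Set.Iic c × K => z.2) h
      exact Prod.ext h1 h2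

lemma Dne (hreg : (#K).IsRegular) (hseg : ∀ b : K, #(Set.Iio b) < #K)
    {l c : K} {y : K → K} (hsplit : splitF S y c) : Nonempty (K ≃ (Dset S l c y)) :=
  Cardinal.eq.1 (Dcard S hreg hseg hsplit)

open scoped Classical in
/-- enumeration of the partition index set -/
noncomputable def eDf (l c : K) (y : K → K) : K → K × K :=
  fun a => if h : Nonempty (K ≃ (Dset S l c y)) then (h.some a : K × K) else (c, a)

lemma eDf_mem {l c : K} {y : K → K} (hne : Nonempty (K ≃ (Dset S l c y))) (a : K) :
    eDf S l c y a ∈ Dset S l c y := by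
  unfold eDf
  rw [dif_pos hne]
  exact (hne.some a).2

lemma eDf_inj {l c : K} {y : K → K} (hne : Nonempty (K ≃ (Dset S l c y))) :
    Function.Injective (eDf S l c y) := by
  intro a a' h
  unfold eDf at h
  rw [dif_pos hne, dif_pos hne] at h
  exact hne.some.injective (Subtype.coe_injective h)

lemma eDf_surj {l c : K} {y : K → K} (hne : Nonempty (K ≃ (Dset S l c y))) {q : K × K}
    (hq : q ∈ Dset S l c y) : ∃ a : K, eDf S l c y a = q := by
  refine ⟨hne.some.symm ⟨q, hq⟩, ?_⟩
  unfold eDf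
  rw [dif_pos hne, Equiv.apply_symm_apply]

end DD

section PhiDef

variable {K : Type u} [LinearOrder K] [WellFoundedLT K] [SuccOrder K] [NoMaxOrder K]
  [Nonempty K] (S : Set (Nd K K))

open scoped Classical in
/-- the main recursion: the node of `S` associated to a node `(b, u↾b)` of the full tree -/
noncomputable def Phi : K → (K → K) → K × (K → K) :=
  (wellFounded_lt (α := K)).fix fun b ih u =>
    if hs : ∃ c, c < b ∧ Order.succ c = b then
      let P := ih hs.choose hs.choose_spec.1 u
      let Q := step S P.1 P.2
      let d := eDf S P.1 Q.1 Q.2 (u hs.choose)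
      (Order.succ d.1, Function.update Q.2 d.1 d.2)
    else if hl : ∃ c, c < b then
      (lub {j | ∃ c, ∃ h : c < b, (ih c h u).1 = j},
        fun i => if h : ∃ c, ∃ hc : c < b, i < (ih c hc u).1
          then (ih h.choose h.choose_spec.choose u).2 i else Classical.arbitrary K)
    else (b, fun _ => Classical.arbitrary K)

open scoped Classical in
lemma Phi_def (b : K) (u : K → K) : Phi S b u =
    if hs : ∃ c, c < b ∧ Order.succ c = b then
      let P := Phi S hs.choose u
      let Q := step S P.1 P.2
      let d := eDf S P.1 Q.1 Q.2 (u hs.choose)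
      (Order.succ d.1, Function.update Q.2 d.1 d.2)
    else if hl : ∃ c, c < b then
      (lub {j | ∃ c, ∃ h : c < b, (Phi S c u).1 = j},
        fun i => if h : ∃ c, ∃ hc : c < b, i < (Phi S c u).1
          then (Phi S h.choose u).2 i else Classical.arbitrary K)
    else (b, fun _ => Classical.arbitrary K) := by
  conv_lhs => rw [Phi, WellFounded.fix_eq]
  rfl

lemma Phi_succ (c : K) (u : K → K) : Phi S (Order.succ c) u =
    ((Order.succ (eDf S (Phi S c u).1 (step S (Phi S c u).1 (Phi S c u).2).1
        (step S (Phi S c u).1 (Phi S c u).2).2 (u c)).1),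
      Function.update (step S (Phi S c u).1 (Phi S c u).2).2
        (eDf S (Phi S c u).1 (step S (Phi S c u).1 (Phi S c u).2).1
          (step S (Phi S c u).1 (Phi S c u).2).2 (u c)).1
        (eDf S (Phi S c u).1 (step S (Phi S c u).1 (Phi S c u).2).1
          (step S (Phi S c u).1 (Phi S c u).2).2 (u c)).2) := by
  have hs : ∃ c', c' < Order.succ c ∧ Order.succ c' = Order.succ c :=
    ⟨c, Order.lt_succ c, rfl⟩
  have hc : hs.choose = c := Order.succ_injective hs.choose_spec.2
  rw [Phi_def, dif_pos hs, hc]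

end PhiDef

section Master

variable {K : Type u} [LinearOrder K] [WellFoundedLT K] [SuccOrder K] [NoMaxOrder K]
  [Nonempty K] (S : Set (Nd K K))

open scoped Classical in
lemma Phi_lim {b : K} (hs : ¬∃ c, c < b ∧ Order.succ c = b) (hl : ∃ c, c < b) (u : K → K) :
    Phi S b u = (lub {j | ∃ c, ∃ h : c < b, (Phi S c u).1 = j},
      fun i => if h : ∃ c, ∃ hc : c < b, i < (Phi S c u).1
        then (Phi S h.choose u).2 i else Classical.arbitrary K) := by
  rw [Phi_def, dif_neg hs, dif_pos hl]

lemma Phi_bot {b : K} (hl : ¬∃ c, c < b) (u : K → K) :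
    Phi S b u = (b, fun _ => Classical.arbitrary K) := by
  rw [Phi_def, dif_neg (fun hs : ∃ c, c < b ∧ Order.succ c = b =>
    hl ⟨hs.choose, hs.choose_spec.1⟩), dif_neg hl]

/-- the master invariant of the recursion `Phi` -/
def MP (b : K) : Prop := ∀ u : K → K,
  inS S (Phi S b u).2 (Phi S b u).1 ∧ b ≤ (Phi S b u).1 ∧
  (∀ c, c < b → (Phi S c u).1 < (Phi S b u).1 ∧ agr (Phi S b u).2 (Phi S c u).2 (Phi S c u).1) ∧
  (∀ u', agr u' u b → Phi S b u' = Phi S b u)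

theorem master (hreg : (#K).IsRegular) (hseg : ∀ b : K, #(Set.Iio b) < #K)
    (hS : MillerTree K S) : ∀ b : K, MP S b := by
  intro b
  refine (wellFounded_lt (α := K)).induction (C := fun b => MP S b) b ?_
  intro b IH u
  by_cases hs : ∃ c, c < b ∧ Order.succ c = b
  · -- successor case
    obtain ⟨c, hcb, hbc⟩ := hs
    subst hbc
    obtain ⟨hPin, hPle, hPcoh, hPloc⟩ := IH c (Order.lt_succ c) u
    obtain ⟨hQ1, hQagr, hQin, hQsplit⟩ := step_spec S hS hPin
    have hne : Nonempty (K ≃ (Dset S (Phi S c u).1 (step S (Phi S c u).1 (Phi S c u).2).1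
        (step S (Phi S c u).1 (Phi S c u).2).2)) := Dne S hreg hseg hQsplit
    have hd := eDf_mem S hne (u c)
    set P := Phi S c u with hPdef
    set Q := step S P.1 P.2 with hQdef
    set d := eDf S P.1 Q.1 Q.2 (u c) with hddef
    have hPhis : Phi S (Order.succ c) u = (Order.succ d.1, Function.update Q.2 d.1 d.2) :=
      Phi_succ S c u
    have hPd : P.1 ≤ d.1 := by
      rcases hd with h | h
      · exact h.1
      · rw [h.1]; exact hQ1
    have hdQ : d.1 ≤ Q.1 := Dset_fst_le S hd
    have hagr_base : agr (Function.update Q.2 d.1 d.2) P.2 P.1 := by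
      intro i hi
      rw [Function.update_of_ne (ne_of_lt (lt_of_lt_of_le hi hPd)) _ _]
      exact hQagr i hi
    have hupd_inS : inS S (Function.update Q.2 d.1 d.2) (Order.succ d.1) := by
      rcases hd with h | h
      · exact h.2.2.2
      · obtain ⟨y, hy1, hy2, hy3⟩ := h.2
        have hy3' : inS S y (Order.succ d.1) := by rw [h.1]; exact hy3
        refine inS_of_agr S (x := y) ?_ hy3'
        intro i hi
        rcases (Order.lt_succ_iff.1 hi).lt_or_eq with hlt | hieq
        · rw [Function.update_of_ne (ne_of_lt hlt) _ _]
          exact hy1 i (by rw [← h.1]; exact hlt)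
        · subst hieq
          rw [Function.update_self]
          rw [h.1]
          exact hy2
    refine ⟨?_, ?_, ?_, ?_⟩
    · rw [hPhis]; exact hupd_inS
    · rw [hPhis]; exact Order.succ_le_succ (hPle.trans hPd)
    · intro c' hc'
      rcases (Order.lt_succ_iff.1 hc').lt_or_eq with h | h
      · obtain ⟨hlt, hagr⟩ := hPcoh c' h
        refine ⟨?_, ?_⟩
        · rw [hPhis]
          exact hlt.trans (lt_of_le_of_lt hPd (Order.lt_succ d.1))
        · rw [hPhis]
          exact (hagr_base.mono hlt.le).trans hagr
      · subst h
        refine ⟨?_, ?_⟩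
        · rw [hPhis]
          exact lt_of_le_of_lt hPd (Order.lt_succ d.1)
        · rw [hPhis]
          exact hagr_base
    · intro u' hu'
      have h1 : Phi S c u' = Phi S c u := hPloc u' (hu'.mono (Order.le_succ c))
      have h2 : u' c = u c := hu' c (Order.lt_succ c)
      rw [Phi_succ S c u', Phi_succ S c u, h1, h2]
  · by_cases hl : ∃ c, c < b
    · -- limit case
      have hsucclt : ∀ c, c < b → Order.succ c < b := fun c hc =>
        lt_of_le_of_ne (Order.succ_le_of_lt hc) (fun he => hs ⟨c, hc, he⟩)
      have hPhib := Phi_lim S hs hl u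
      have hLn_card : #({j | ∃ c, ∃ h : c < b, (Phi S c u).1 = j} : Set K) < #K := by
        refine lt_of_le_of_lt (Cardinal.mk_le_of_surjective
          (f := fun c : Set.Iio b =>
            (⟨(Phi S c.1 u).1, c.1, c.2, rfl⟩ :
              ({j | ∃ c, ∃ h : c < b, (Phi S c u).1 = j} : Set K))) ?_) (hseg b)
        rintro ⟨j, c, hc, rfl⟩
        exact ⟨⟨c, hc⟩, rfl⟩
      have hLn_bdd : (upperBounds {j | ∃ c, ∃ h : c < b, (Phi S c u).1 = j}).Nonempty :=
        bddAbove' hreg hseg (fun b => exists_gt b) _ hLn_card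
      have hlen_le : ∀ c, c < b → (Phi S c u).1 ≤ (Phi S b u).1 := by
        intro c hc
        rw [hPhib]
        exact le_lub hLn_bdd ⟨c, hc, rfl⟩
      have hlen_lt : ∀ c, c < b → (Phi S c u).1 < (Phi S b u).1 := by
        intro c hc
        have h1 : (Phi S c u).1 < (Phi S (Order.succ c) u).1 :=
          ((IH _ (hsucclt c hc) u).2.2.1 c (Order.lt_succ c)).1
        exact lt_of_lt_of_le h1 (hlen_le _ (hsucclt c hc))
      have hmerge : ∀ c, ∀ hc : c < b, agr (Phi S b u).2 (Phi S c u).2 (Phi S c u).1 := by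
        intro c hc i hi
        rw [hPhib]
        have hex : ∃ c'', ∃ hc'' : c'' < b, i < (Phi S c'' u).1 := ⟨c, hc, hi⟩
        dsimp only
        rw [dif_pos hex]
        have hc₀b : hex.choose < b := hex.choose_spec.choose
        have hic₀ : i < (Phi S hex.choose u).1 := hex.choose_spec.choose_spec
        rcases lt_trichotomy hex.choose c with h | h | h
        · exact (((IH c hc u).2.2.1 _ h).2 i hic₀).symm
        · rw [h]
        · exact ((IH _ hc₀b u).2.2.1 c h).2 i hi
      have hble : b ≤ (Phi S b u).1 := by
        by_contra hb'
        push_neg at hb'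
        have h1 : Order.succ (Phi S b u).1 < b := hsucclt _ hb'
        have h2 := (IH _ h1 u).2.1
        have h3 := hlen_le _ h1
        exact absurd (h2.trans h3) (not_le.2 (Order.lt_succ _))
      refine ⟨?_, hble, fun c hc => ⟨hlen_lt c hc, hmerge c hc⟩, ?_⟩
      · -- inS at limit
        have hlim' : IsLimElt K (Phi S b u).1 := by
          constructor
          · obtain ⟨c, hc⟩ := hl
            exact ⟨(Phi S c u).1, hlen_lt c hc⟩
          · intro e he
            by_contra hcon
            push_neg at hcon
            have hub : (Phi S b u).1 ≤ e := by
              rw [hPhib]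
              refine lub_le ?_
              rintro j ⟨c, hc, rfl⟩
              by_contra hj
              push_neg at hj
              exact absurd (hlen_lt c hc) (not_lt.2 (hcon _ hj))
            exact absurd he (not_lt.2 hub)
        refine inS_limit S hS.2.2.1 hlim' ?_
        intro e he
        have hnub : ∃ c, ∃ hc : c < b, e < (Phi S c u).1 := by
          by_contra hcon
          push_neg at hcon
          have : (Phi S b u).1 ≤ e := by
            rw [hPhib]
            refine lub_le ?_
            rintro j ⟨c, hc, rfl⟩
            exact hcon c hc
          exact absurd he (not_lt.2 this)
        obtain ⟨c, hc, hec⟩ := hnub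
        have h1 : inS S (Phi S c u).2 e := inS_mono S hS.2.1 (IH c hc u).1 hec.le
        exact inS_of_agr S ((hmerge c hc).symm.mono hec.le) h1
      · -- locality
        intro u' hu'
        have hPc : ∀ c, ∀ hc : c < b, Phi S c u' = Phi S c u := fun c hc =>
          (IH c hc u).2.2.2 u' (hu'.mono hc.le)
        rw [Phi_lim S hs hl u', Phi_lim S hs hl u]
        have hsets : {j | ∃ c, ∃ h : c < b, (Phi S c u').1 = j}
            = {j | ∃ c, ∃ h : c < b, (Phi S c u).1 = j} := by
          ext j
          constructor
          · rintro ⟨c, hc, rfl⟩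
            exact ⟨c, hc, by rw [hPc c hc]⟩
          · rintro ⟨c, hc, rfl⟩
            exact ⟨c, hc, by rw [hPc c hc]⟩
        refine Prod.ext ?_ ?_
        · dsimp only
          rw [hsets]
        · dsimp only
          funext i
          by_cases hex : ∃ c, ∃ hc : c < b, i < (Phi S c u).1
          · have hex' : ∃ c, ∃ hc : c < b, i < (Phi S c u').1 := by
              obtain ⟨c, hc, hi⟩ := hex
              exact ⟨c, hc, by rw [hPc c hc]; exact hi⟩
            rw [dif_pos hex', dif_pos hex]
            have hceq : Phi S hex'.choose u' = Phi S hex'.choose u :=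
              hPc _ hex'.choose_spec.choose
            rw [hceq]
            have hi1 : i < (Phi S hex'.choose u).1 := by
              rw [← hceq]; exact hex'.choose_spec.choose_spec
            have hi2 : i < (Phi S hex.choose u).1 := hex.choose_spec.choose_spec
            rcases lt_trichotomy hex'.choose hex.choose with h | h | h
            · exact (((IH _ hex.choose_spec.choose u).2.2.1 _ h).2 i hi1).symm
            · rw [h]
            · exact ((IH _ hex'.choose_spec.choose u).2.2.1 _ h).2 i hi2
          · have hex' : ¬∃ c, ∃ hc : c < b, i < (Phi S c u').1 := by
              rintro ⟨c, hc, hi⟩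
              exact hex ⟨c, hc, by rw [← hPc c hc]; exact hi⟩
            rw [dif_neg hex', dif_neg hex]
    · -- bottom case
      have hble : ∀ x : K, b ≤ x := fun x => le_of_not_gt (fun hx => hl ⟨x, hx⟩)
      have hbot := Phi_bot S hl u
      refine ⟨?_, ?_, ?_, ?_⟩
      · rw [hbot]
        obtain ⟨p₀, hp₀⟩ := hS.1
        have key : xRes K (fun _ : K => Classical.arbitrary K) b = ndRes K p₀ b (hble p₀.1) := by
          refine congrArg (Sigma.mk b) (funext fun i => ?_)
          exact absurd i.2 (not_lt.2 (hble i.1))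
        show xRes K _ b ∈ S
        rw [key]
        exact hS.2.1 p₀ hp₀ b (hble p₀.1)
      · rw [hbot]
      · intro c hc
        exact absurd hc (not_lt.2 (hble c))
      · intro u' _
        rw [Phi_bot S hl u', Phi_bot S hl u]

end Master

section Part

variable {K : Type u} [LinearOrder K] [WellFoundedLT K] [SuccOrder K] [NoMaxOrder K]
  [Nonempty K] (S : Set (Nd K K))

lemma part_unique (hreg : (#K).IsRegular) (hseg : ∀ b : K, #(Set.Iio b) < #K)
    (hS : MillerTree K S) {w : K → K} {c : K} {u₁ u₂ : K → K}
    (h12 : agr u₁ u₂ c)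
    (h1 : agr w (Phi S (Order.succ c) u₁).2 (Phi S (Order.succ c) u₁).1)
    (h2 : agr w (Phi S (Order.succ c) u₂).2 (Phi S (Order.succ c) u₂).1) :
    u₁ c = u₂ c := by
  have hP : Phi S c u₁ = Phi S c u₂ := (master S hreg hseg hS c u₂).2.2.2 u₁ h12
  obtain ⟨hQ1, hQagr, hQin, hQsplit⟩ := step_spec S hS (master S hreg hseg hS c u₂).1
  have hne : Nonempty (K ≃ (Dset S (Phi S c u₂).1 (step S (Phi S c u₂).1 (Phi S c u₂).2).1
      (step S (Phi S c u₂).1 (Phi S c u₂).2).2)) := Dne S hreg hseg hQsplit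
  set P := Phi S c u₂ with hPdef
  set Q := step S P.1 P.2 with hQdef
  set d₁ := eDf S P.1 Q.1 Q.2 (u₁ c) with hd₁def
  set d₂ := eDf S P.1 Q.1 Q.2 (u₂ c) with hd₂def
  have hPhi1 : Phi S (Order.succ c) u₁ = (Order.succ d₁.1, Function.update Q.2 d₁.1 d₁.2) := by
    rw [Phi_succ S c u₁, hP]
  have hPhi2 : Phi S (Order.succ c) u₂ = (Order.succ d₂.1, Function.update Q.2 d₂.1 d₂.2) :=
    Phi_succ S c u₂
  rw [hPhi1] at h1
  rw [hPhi2] at h2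
  dsimp only at h1 h2
  have hd₁ : d₁ ∈ Dset S P.1 Q.1 Q.2 := eDf_mem S hne (u₁ c)
  have hd₂ : d₂ ∈ Dset S P.1 Q.1 Q.2 := eDf_mem S hne (u₂ c)
  have hw₁ : w d₁.1 = d₁.2 := by
    have := h1 d₁.1 (Order.lt_succ d₁.1)
    rwa [Function.update_self] at this
  have hw₂ : w d₂.1 = d₂.2 := by
    have := h2 d₂.1 (Order.lt_succ d₂.1)
    rwa [Function.update_self] at this
  have key : ∀ {e e' : K × K}, e ∈ Dset S P.1 Q.1 Q.2 → e' ∈ Dset S P.1 Q.1 Q.2 →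
      w e.1 = e.2 → (∀ i, i < Order.succ e'.1 → w i = Function.update Q.2 e'.1 e'.2 i) →
      e.1 < e'.1 → False := by
    intro e e' he he' hwe hext hlt
    have h1' : e.1 < Q.1 := lt_of_lt_of_le hlt (Dset_fst_le S he')
    have hne' : e.2 ≠ Q.2 e.1 := by
      rcases he with h | h
      · exact h.2.2.1
      · exact absurd (h.1 ▸ h1') (lt_irrefl _)
    have : w e.1 = Q.2 e.1 := by
      have := hext e.1 ((hlt.trans (Order.lt_succ e'.1)))
      rwa [Function.update_of_ne (ne_of_lt hlt) _ _] at this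
    exact hne' (hwe ▸ this)
  rcases lt_trichotomy d₁.1 d₂.1 with h | h | h
  · exact absurd (key hd₁ hd₂ hw₁ h2 h) id
  · have h22 : d₁.2 = d₂.2 := by
      rw [← hw₁, ← hw₂, h]
    have : d₁ = d₂ := Prod.ext h h22
    exact eDf_inj S hne this
  · exact absurd (key hd₂ hd₁ hw₂ h1 h) id

lemma part_exists (hreg : (#K).IsRegular) (hseg : ∀ b : K, #(Set.Iio b) < #K)
    (hS : MillerTree K S) {w : K → K} (hw : w ∈ body K S) {c : K} {u : K → K}
    (hwP : agr w (Phi S c u).2 (Phi S c u).1) :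
    ∃ a : K, agr w (Phi S (Order.succ c) (Function.update u c a)).2
      (Phi S (Order.succ c) (Function.update u c a)).1 := by
  obtain ⟨hQ1, hQagr, hQin, hQsplit⟩ := step_spec S hS (master S hreg hseg hS c u).1
  have hne : Nonempty (K ≃ (Dset S (Phi S c u).1 (step S (Phi S c u).1 (Phi S c u).2).1
      (step S (Phi S c u).1 (Phi S c u).2).2)) := Dne S hreg hseg hQsplit
  set P := Phi S c u with hPdef
  set Q := step S P.1 P.2 with hQdef
  have hPbody : agr w P.2 P.1 := hwP
  -- least deviation level
  have hAne : Set.Nonempty {i : K | P.1 ≤ i ∧ (i = Q.1 ∨ w i ≠ Q.2 i)} :=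
    ⟨Q.1, ⟨hQ1, Or.inl rfl⟩⟩
  set A := {i : K | P.1 ≤ i ∧ (i = Q.1 ∨ w i ≠ Q.2 i)} with hAdef
  set l := (wellFounded_lt (α := K)).min A hAne with hldef
  have hlA : l ∈ A := (wellFounded_lt (α := K)).min_mem A hAne
  have hQ1A : Q.1 ∈ A := ⟨hQ1, Or.inl rfl⟩
  have hlQ : l ≤ Q.1 := (wellFounded_lt (α := K)).min_le hQ1A
  have hagrQ : agr w Q.2 l := by
    intro i hi
    rcases le_or_gt P.1 i with hPi | hPi
    · have hiA : i ∉ A := fun hmem => (wellFounded_lt (α := K)).not_lt_min A hmem hi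
      rw [hAdef] at hiA
      simp only [Set.mem_setOf_eq, not_and, not_or, not_ne_iff] at hiA
      exact (hiA hPi).2
    · exact (hwP i hPi).trans ((hQagr i hPi).symm)
  have hqD : (l, w l) ∈ Dset S P.1 Q.1 Q.2 := by
    rcases eq_or_lt_of_le hlQ with heq | hlt
    · refine Or.inr ⟨heq, ?_⟩
      refine ⟨w, ?_, ?_, ?_⟩
      · intro i hi
        exact hagrQ i (heq ▸ hi)
      · rw [← heq]
      · exact hw (Order.succ Q.1)
    · have wne : w l ≠ Q.2 l := hlA.2.resolve_left (ne_of_lt hlt)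
      refine Or.inl ⟨hlA.1, hlt, wne, ?_⟩
      · refine inS_of_agr S (x := w) ?_ (hw (Order.succ l))
        intro i hi
        rcases (Order.lt_succ_iff.1 hi).lt_or_eq with h' | h'
        · rw [Function.update_of_ne (ne_of_lt h') _ _]
          exact hagrQ i h'
        · subst h'
          rw [Function.update_self]
  obtain ⟨a, ha⟩ := eDf_surj S hne hqD
  refine ⟨a, ?_⟩
  have hloc : Phi S c (Function.update u c a) = Phi S c u :=
    (master S hreg hseg hS c u).2.2.2 _ (fun i hi =>
      Function.update_of_ne (ne_of_lt hi) _ _)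
  have hval : Function.update u c a c = a := Function.update_self _ _ _
  have hPhis : Phi S (Order.succ c) (Function.update u c a)
      = (Order.succ l, Function.update Q.2 l (w l)) := by
    rw [Phi_succ S c (Function.update u c a), hloc, hval, ← hPdef, ← hQdef, ha]
  rw [hPhis]
  dsimp only
  intro i hi
  rcases (Order.lt_succ_iff.1 hi).lt_or_eq with h' | h'
  · rw [Function.update_of_ne (ne_of_lt h') _ _]
    exact hagrQ i h'
  · subst h'
    rw [Function.update_self]

open scoped Classical in
/-- inverse recursion: read off the coordinates of a branch of `S` -/
noncomputable def Psi (w : K → K) : K → K :=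
  (wellFounded_lt (α := K)).fix fun c ih =>
    if h : ∃ a : K, agr w (Phi S (Order.succ c) (Function.update
        (fun i => if hi : i < c then ih i hi else w i) c a)).2
      (Phi S (Order.succ c) (Function.update
        (fun i => if hi : i < c then ih i hi else w i) c a)).1
    then h.choose else Classical.arbitrary K

open scoped Classical in
lemma Psi_def (w : K → K) (c : K) : Psi S w c =
    if h : ∃ a : K, agr w (Phi S (Order.succ c) (Function.update
        (fun i => if hi : i < c then Psi S w i else w i) c a)).2
      (Phi S (Order.succ c) (Function.update
        (fun i => if hi : i < c then Psi S w i else w i) c a)).1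
    then h.choose else Classical.arbitrary K := by
  conv_lhs => rw [Psi, WellFounded.fix_eq]
  rfl

end Part

section Branch

variable {K : Type u} [LinearOrder K] [WellFoundedLT K] [SuccOrder K] [NoMaxOrder K]
  [Nonempty K] (S : Set (Nd K K))

variable (hreg : (#K).IsRegular) (hseg : ∀ b : K, #(Set.Iio b) < #K) (hS : MillerTree K S)

include hreg hseg hS

lemma Psi_ext {w : K → K} (hw : w ∈ body K S) :
    ∀ c, agr w (Phi S c (Psi S w)).2 (Phi S c (Psi S w)).1 := by
  intro c
  refine (wellFounded_lt (α := K)).induction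
    (C := fun c => agr w (Phi S c (Psi S w)).2 (Phi S c (Psi S w)).1) c ?_
  intro c IH
  by_cases hs : ∃ c', c' < c ∧ Order.succ c' = c
  · obtain ⟨c', hc', hce⟩ := hs
    subst hce
    set v : K → K := fun i => if hi : i < c' then Psi S w i else w i with hvdef
    have hvagr : agr v (Psi S w) c' := by
      intro i hi
      rw [hvdef]
      dsimp only
      rw [dif_pos hi]
    have hPv : Phi S c' v = Phi S c' (Psi S w) :=
      (master S hreg hseg hS c' (Psi S w)).2.2.2 v hvagr
    have hwP : agr w (Phi S c' v).2 (Phi S c' v).1 := by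
      rw [hPv]; exact IH c' (Order.lt_succ c')
    have hex : ∃ a, agr w (Phi S (Order.succ c') (Function.update v c' a)).2
        (Phi S (Order.succ c') (Function.update v c' a)).1 :=
      part_exists S hreg hseg hS hw hwP
    have hPsic : Psi S w c' = hex.choose := by
      rw [Psi_def S w c']
      exact dif_pos hex
    have hspec := hex.choose_spec
    have hagr2 : agr (Function.update v c' hex.choose) (Psi S w) (Order.succ c') := by
      intro i hi
      rcases (Order.lt_succ_iff.1 hi).lt_or_eq with h' | h'
      · rw [Function.update_of_ne (ne_of_lt h') _ _]
        exact hvagr i h'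
      · subst h'
        rw [Function.update_self, hPsic]
    have hPloc : Phi S (Order.succ c') (Function.update v c' hex.choose)
        = Phi S (Order.succ c') (Psi S w) :=
      (master S hreg hseg hS (Order.succ c') (Psi S w)).2.2.2 _ hagr2
    rw [← hPloc]
    exact hspec
  · by_cases hl : ∃ c', c' < c
    · intro i hi
      rw [Phi_lim S hs hl (Psi S w)] at hi ⊢
      dsimp only at hi ⊢
      have hex : ∃ c₀, ∃ hc₀ : c₀ < c, i < (Phi S c₀ (Psi S w)).1 := by
        by_contra hcon
        push_neg at hcon
        have : lub {j | ∃ c₀, ∃ h : c₀ < c, (Phi S c₀ (Psi S w)).1 = j} ≤ i := by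
          refine lub_le ?_
          rintro j ⟨c₀, hc₀, rfl⟩
          exact hcon c₀ hc₀
        exact absurd hi (not_lt.2 this)
      rw [dif_pos hex]
      exact IH hex.choose hex.choose_spec.choose i hex.choose_spec.choose_spec
    · intro i hi
      rw [Phi_bot S hl (Psi S w)] at hi
      exact absurd hi (not_lt.2 (le_of_not_gt (fun h' => hl ⟨i, h'⟩)))

lemma Psi_unique {w : K → K} (hw : w ∈ body K S) {u : K → K}
    (hu : ∀ c, agr w (Phi S c u).2 (Phi S c u).1) : ∀ c, u c = Psi S w c := by
  intro c
  refine (wellFounded_lt (α := K)).induction (C := fun c => u c = Psi S w c) c ?_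
  intro c IH
  set v : K → K := fun i => if hi : i < c then Psi S w i else w i with hvdef
  have hvu : agr v u c := by
    intro i hi
    rw [hvdef]
    dsimp only
    rw [dif_pos hi, ← IH i hi]
  have hPv : Phi S c v = Phi S c u := (master S hreg hseg hS c u).2.2.2 v hvu
  have hwP : agr w (Phi S c v).2 (Phi S c v).1 := by rw [hPv]; exact hu c
  have hex := part_exists S hreg hseg hS hw hwP
  have hPsic : Psi S w c = hex.choose := by
    rw [Psi_def S w c]
    exact dif_pos hex
  have hspec := hex.choose_spec
  have hagru : agr (Function.update v c (u c)) u (Order.succ c) := by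
    intro i hi
    rcases (Order.lt_succ_iff.1 hi).lt_or_eq with h' | h'
    · rw [Function.update_of_ne (ne_of_lt h') _ _]
      exact hvu i h'
    · subst h'
      rw [Function.update_self]
  have hPhiu : Phi S (Order.succ c) (Function.update v c (u c)) = Phi S (Order.succ c) u :=
    (master S hreg hseg hS (Order.succ c) u).2.2.2 _ hagru
  have h1 : agr w (Phi S (Order.succ c) (Function.update v c (u c))).2
      (Phi S (Order.succ c) (Function.update v c (u c))).1 := by
    rw [hPhiu]; exact hu (Order.succ c)
  have h12 : agr (Function.update v c (u c)) (Function.update v c hex.choose) c := by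
    intro i hi
    rw [Function.update_of_ne (ne_of_lt hi) _ _, Function.update_of_ne (ne_of_lt hi) _ _]
  have hkey := part_unique S hreg hseg hS h12 h1 hspec
  rw [Function.update_self, Function.update_self] at hkey
  rw [hkey, hPsic]

lemma Psi_stable {w w' : K → K} (hw : w ∈ body K S) (hw' : w' ∈ body K S) (b : K)
    (hag : agr w' w (Phi S b (Psi S w)).1) : ∀ c, c < b → Psi S w' c = Psi S w c := by
  intro c
  refine (wellFounded_lt (α := K)).induction
    (C := fun c => c < b → Psi S w' c = Psi S w c) c ?_
  intro c IH hcb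
  have hagc : agr (Psi S w') (Psi S w) c := fun c' hc' => IH c' hc' (hc'.trans hcb)
  have hlen : (Phi S (Order.succ c) (Psi S w)).1 ≤ (Phi S b (Psi S w)).1 := by
    rcases eq_or_lt_of_le (Order.succ_le_of_lt hcb) with heq | hlt
    · rw [heq]
    · exact ((master S hreg hseg hS b (Psi S w)).2.2.1 _ hlt).1.le
  have h1 : agr w' (Phi S (Order.succ c) (Psi S w')).2 (Phi S (Order.succ c) (Psi S w')).1 :=
    Psi_ext S hreg hseg hS hw' (Order.succ c)
  have h2 : agr w' (Phi S (Order.succ c) (Psi S w)).2 (Phi S (Order.succ c) (Psi S w)).1 := by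
    intro i hi
    exact (hag i (lt_of_lt_of_le hi hlen)).trans (Psi_ext S hreg hseg hS hw (Order.succ c) i hi)
  exact part_unique S hreg hseg hS hagc h1 h2

/-- the branch of `S` coded by `u` -/
noncomputable def G (u : K → K) : K → K := fun i => (Phi S (Order.succ i) u).2 i

lemma G_agr (b : K) (u : K → K) {i : K} (hi : i < (Phi S b u).1) :
    G S u i = (Phi S b u).2 i := by
  rcases le_or_gt (Order.succ i) b with hle | hlt
  · rcases eq_or_lt_of_le hle with heq | hlt'
    · show (Phi S (Order.succ i) u).2 i = (Phi S b u).2 i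
      rw [heq]
    · have h := ((master S hreg hseg hS b u).2.2.1 (Order.succ i) hlt').2
      have hil : i < (Phi S (Order.succ i) u).1 :=
        lt_of_lt_of_le (Order.lt_succ i) (master S hreg hseg hS (Order.succ i) u).2.1
      exact (h i hil).symm
  · exact ((master S hreg hseg hS (Order.succ i) u).2.2.1 b hlt).2 i hi

lemma G_mem (u : K → K) : G S u ∈ body K S := by
  intro b
  have h1 : inS S (Phi S b u).2 b :=
    inS_mono S hS.2.1 (master S hreg hseg hS b u).1 (master S hreg hseg hS b u).2.1
  refine inS_of_agr S (x := (Phi S b u).2) ?_ h1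
  intro i hi
  exact (G_agr S hreg hseg hS b u
    (lt_of_lt_of_le hi (master S hreg hseg hS b u).2.1)).symm

lemma G_Psi {w : K → K} (hw : w ∈ body K S) : G S (Psi S w) = w := by
  funext i
  have h := Psi_ext S hreg hseg hS hw (Order.succ i) i
    (lt_of_lt_of_le (Order.lt_succ i) (master S hreg hseg hS (Order.succ i) (Psi S w)).2.1)
  exact h.symm

lemma Psi_G (u : K → K) : Psi S (G S u) = u := by
  funext c
  refine (Psi_unique S hreg hseg hS (G_mem S hreg hseg hS u) (u := u) ?_ c).symm
  intro b i hi
  exact G_agr S hreg hseg hS b u hi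

end Branch

section Topology

variable {K : Type u} [LinearOrder K]

lemma basic_open (b : K) (s : K → K) :
    IsOpen[bTop K K] {y : K → K | ∀ i, i < b → y i = s i} :=
  TopologicalSpace.isOpen_generateFrom_of_mem ⟨b, s, rfl⟩

lemma body_closed (S : Set (Nd K K)) : IsClosed[bTop K K] (body K S) := by
  letI := bTop K K
  rw [← isOpen_compl_iff]
  rw [isOpen_iff_forall_mem_open]
  intro x hx
  obtain ⟨b, hb⟩ := not_forall.1 hx
  refine ⟨{y | ∀ i, i < b → y i = x i}, ?_, basic_open b x, fun i _ => rfl⟩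
  intro y hy
  intro hyT
  apply hb
  have hxy : xRes K y b = xRes K x b := congrArg (Sigma.mk b) (funext fun i => hy i.1 i.2)
  rw [← hxy]
  exact hyT b

variable [WellFoundedLT K] [SuccOrder K] [NoMaxOrder K] [Nonempty K] (S : Set (Nd K K))

variable (hreg : (#K).IsRegular) (hseg : ∀ b : K, #(Set.Iio b) < #K) (hS : MillerTree K S)

include hreg hseg hS

lemma G_cont : @Continuous (K → K) (K → K) (bTop K K) (bTop K K) (G S) := by
  letI := bTop K K
  rw [show bTop K K = TopologicalSpace.generateFrom
    {U | ∃ (b : K) (s : K → K), U = {x | ∀ i, i < b → x i = s i}} from rfl,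
    continuous_generateFrom_iff]
  rintro U ⟨b, s, rfl⟩
  rw [isOpen_iff_forall_mem_open]
  intro u hu
  refine ⟨{u' | ∀ i, i < b → u' i = u i}, ?_, basic_open b u, fun i _ => rfl⟩
  intro u' hu'
  show ∀ i, i < b → G S u' i = s i
  intro i hib
  have hloc : Phi S (Order.succ i) u' = Phi S (Order.succ i) u :=
    (master S hreg hseg hS (Order.succ i) u).2.2.2 u'
      (fun j hj => hu' j (lt_of_lt_of_le hj (Order.succ_le_of_lt hib)))
  show (Phi S (Order.succ i) u').2 i = s i
  rw [hloc]
  exact hu i hib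

lemma Psi_cont : @Continuous ↥(body K S) (K → K)
    (@instTopologicalSpaceSubtype _ _ (bTop K K)) (bTop K K) (fun w => Psi S w.1) := by
  letI := bTop K K
  rw [show bTop K K = TopologicalSpace.generateFrom
    {U | ∃ (b : K) (s : K → K), U = {x | ∀ i, i < b → x i = s i}} from rfl,
    continuous_generateFrom_iff]
  rintro U ⟨b, s, rfl⟩
  rw [isOpen_iff_forall_mem_open]
  rintro ⟨w, hw⟩ hmem
  refine ⟨Subtype.val ⁻¹' {w' : K → K | ∀ i, i < (Phi S b (Psi S w)).1 → w' i = w i}, ?_,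
    (basic_open _ w).preimage continuous_subtype_val, fun i _ => rfl⟩
  rintro ⟨w', hw'⟩ hagr'
  show ∀ i, i < b → Psi S w' i = s i
  intro i hib
  rw [Psi_stable S hreg hseg hS hw hw' b hagr' i hib]
  exact hmem i hib

lemma homeoBaire : HomeoToBaire K (body K S) := by
  letI := bTop K K
  let E : (K → K) ≃ ↥(body K S) :=
    { toFun := fun u => ⟨G S u, G_mem S hreg hseg hS u⟩
      invFun := fun w => Psi S w.1
      left_inv := fun u => Psi_G S hreg hseg hS u
      right_inv := fun w => Subtype.ext (G_Psi S hreg hseg hS w.2) }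
  have hto : Continuous E.toFun :=
    Continuous.subtype_mk (G_cont S hreg hseg hS) _
  have hinv : Continuous E.invFun := Psi_cont S hreg hseg hS
  exact Nonempty.intro
    (Homeomorph.symm { toEquiv := E, continuous_toFun := hto, continuous_invFun := hinv })

end Topology

end MB

/-- The body of a κ-Miller tree is a closed subset of `K → K` homeomorphic to
the whole generalized Baire space. -/
theorem millerTree_body_closed_homeoBaire (K : Type u) [LinearOrder K] [WellFoundedLT K]
    (hseg : ∀ b : K, #(Set.Iio b) < #K)
    (hunc : ℵ₀ < #K) (hpow : Cardinal.powerlt #K #K = #K)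
    (S : Set (Nd K K)) (hS : MillerTree K S) :
    IsClosed[bTop K K] (body K S) ∧ HomeoToBaire K (body K S) := by
  letI : SuccOrder K := SuccOrder.ofLinearWellFoundedLT K
  haveI : Nonempty K := MB.nonemptyK hunc
  haveI : NoMaxOrder K := ⟨fun b => MB.noMax hseg hunc b⟩
  have hreg := MB.regK hunc hpow
  exact ⟨MB.body_closed S, MB.homeoBaire S hreg hseg hS⟩
end
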